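/- arXiv:1803.02624 — 6 statements merged into one kernel-verified Lean document; each statement's English description precedes it below -/
import Mathlib

section
/- Let P be a transition matrix on a finite state space Ω satisfying the lumpability condition with respect to an equivalence relation ∼, and let π be a probability distribution on Ω satisfying detailed balance with respect to P, i.e. π x · P x y = π y · P y x for all x, y ∈ Ω. Then the pushforward distribution π̄ on the quotient Ω̄, defined by π̄(C) = ∑_{z ∈ C} π z, satisfies detailed balance with respect to the projected matrix P̄: π̄([x]) · P̄([x],[y]) = π̄([y]) · P̄([y],[x]) for all x, y ∈ Ω. -/
open Finset

noncomputable section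

variable {Ω : Type*}

/-- The sum of `μ` over the equivalence class `C` of the setoid `s`. -/
def Pushforward (s : Setoid Ω) [Fintype Ω] [DecidableEq (Quotient s)]
    (μ : Ω → ℝ) (C : Quotient s) : ℝ :=
  ∑ z ∈ Finset.univ.filter (fun z => Quotient.mk s z = C), μ z

/-- The lumpability condition. -/
def IsLumpable (s : Setoid Ω) [Fintype Ω] [DecidableEq (Quotient s)]
    (P : Ω → Ω → ℝ) : Prop :=
  ∀ x x' : Ω, s.r x x' → ∀ C : Quotient s,
    Pushforward s (P x) C = Pushforward s (P x') C

/-- The projected (lumped) transition matrix on the quotient. -/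
def Proj (s : Setoid Ω) [Fintype Ω] [DecidableEq (Quotient s)]
    (P : Ω → Ω → ℝ) (C D : Quotient s) : ℝ :=
  Pushforward s (P C.out) D

lemma double_sum_eq (s : Setoid Ω) [Fintype Ω] [DecidableEq (Quotient s)]
    (P : Ω → Ω → ℝ) (hlump : IsLumpable s P) (π : Ω → ℝ) (C D : Quotient s) :
    Pushforward s π C * Proj s P C D =
      ∑ a ∈ Finset.univ.filter (fun a => Quotient.mk s a = C),
        ∑ b ∈ Finset.univ.filter (fun b => Quotient.mk s b = D), π a * P a b := by
  rw [Pushforward, sum_mul]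
  refine sum_congr rfl fun a ha => ?_
  have hkey : Pushforward s (P a) D = Proj s P C D := by
    refine hlump a C.out (Quotient.exact ?_) D
    rw [(mem_filter.mp ha).2, Quotient.out_eq]
  rw [← hkey, Pushforward, mul_sum]

/-- detailed balance is inherited by the projected chain. -/
theorem projected_detailed_balance
    [Fintype Ω] (s : Setoid Ω) [DecidableEq (Quotient s)] [Fintype (Quotient s)]
    (P : Ω → Ω → ℝ)
    (hP0 : ∀ x y, 0 ≤ P x y) (hP1 : ∀ x, ∑ y, P x y = 1)
    (hlump : IsLumpable s P)
    (π : Ω → ℝ) (hπ0 : ∀ x, 0 ≤ π x) (hπ1 : ∑ x, π x = 1)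
    (hdb : ∀ x y, π x * P x y = π y * P y x) :
    ∀ x y : Ω,
      Pushforward s π (Quotient.mk s x) * Proj s P (Quotient.mk s x) (Quotient.mk s y) =
      Pushforward s π (Quotient.mk s y) * Proj s P (Quotient.mk s y) (Quotient.mk s x) := by
  intro x y
  rw [double_sum_eq s P hlump, double_sum_eq s P hlump, Finset.sum_comm]
  exact sum_congr rfl fun b _ => sum_congr rfl fun a _ => hdb a b
end
end

section
/- Let P be a transition matrix on a finite state space Ω satisfying the lumpability condition with respect to an equivalence relation ∼, and let π be any probability distribution on Ω with pushforward π̄ on the quotient Ω̄. Then for every x ∈ Ω and every t ∈ ℕ, the total variation distance of the t-step distribution of P started at x from π is at least the total variation distance of the t-step distribution of the projected matrix P̄ started at [x] from π̄: d_V(𝟙_x P^t, π) ≥ d_V(𝟙_{[x]} P̄^t, π̄). -/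
open Finset

noncomputable section

variable {Ω : Type*}

/-- One step of the Markov chain: `(μP)(y) = ∑ x, μ x * P x y`. -/
def Step {S : Type*} [Fintype S] (P : S → S → ℝ) (μ : S → ℝ) : S → ℝ :=
  fun y => ∑ x, μ x * P x y

/-- The one-point distribution at `x`. -/
def onePoint {S : Type*} [DecidableEq S] (x : S) : S → ℝ :=
  fun y => if y = x then 1 else 0

/-- Total variation distance between two distributions on a finite set. -/
def dV {S : Type*} [Fintype S] (μ ν : S → ℝ) : ℝ :=
  (1 / 2) * ∑ x, |μ x - ν x|


lemma pushforward_step (s : Setoid Ω) [Fintype Ω] [DecidableEq (Quotient s)]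
    [Fintype (Quotient s)] [DecidableEq Ω]
    (P : Ω → Ω → ℝ) (hlump : IsLumpable s P) (μ : Ω → ℝ) :
    Pushforward s (Step P μ) = Step (Proj s P) (Pushforward s μ) := by
  funext C
  have key : ∀ x : Ω, Pushforward s (P x) C = Proj s P (Quotient.mk s x) C := by
    intro x
    apply hlump
    have : Quotient.mk s ((Quotient.mk s x).out) = Quotient.mk s x := Quotient.out_eq _
    exact Quotient.exact this.symm
  calc Pushforward s (Step P μ) C
      = ∑ z ∈ Finset.univ.filter (fun z => Quotient.mk s z = C), ∑ x, μ x * P x z := rfl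
    _ = ∑ x, ∑ z ∈ Finset.univ.filter (fun z => Quotient.mk s z = C), μ x * P x z :=
        Finset.sum_comm
    _ = ∑ x, μ x * Pushforward s (P x) C := by
        simp [Pushforward, Finset.mul_sum]
    _ = ∑ x, μ x * Proj s P (Quotient.mk s x) C := by simp_rw [key]
    _ = ∑ D : Quotient s,
          ∑ x ∈ Finset.univ.filter (fun x => Quotient.mk s x = D),
            μ x * Proj s P (Quotient.mk s x) C := by
        rw [Finset.sum_fiberwise]
    _ = ∑ D : Quotient s, Pushforward s μ D * Proj s P D C := by
        refine Finset.sum_congr rfl fun D _ => ?_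
        rw [Pushforward, Finset.sum_mul]
        refine Finset.sum_congr rfl fun x hx => ?_
        rw [(Finset.mem_filter.mp hx).2]
    _ = Step (Proj s P) (Pushforward s μ) C := rfl

lemma pushforward_onePoint (s : Setoid Ω) [Fintype Ω] [DecidableEq (Quotient s)]
    [DecidableEq Ω] (x : Ω) :
    Pushforward s (onePoint x) = onePoint (Quotient.mk s x) := by
  funext C
  simp only [Pushforward, onePoint]
  rw [Finset.sum_ite_eq' (Finset.univ.filter (fun z => Quotient.mk s z = C)) x (fun _ => (1:ℝ))]
  by_cases h : Quotient.mk s x = C <;> simp [h, eq_comm]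

lemma dV_pushforward_le (s : Setoid Ω) [Fintype Ω] [DecidableEq (Quotient s)]
    [Fintype (Quotient s)] (μ ν : Ω → ℝ) :
    dV (Pushforward s μ) (Pushforward s ν) ≤ dV μ ν := by
  unfold dV
  have h12 : (0:ℝ) ≤ 1/2 := by norm_num
  apply mul_le_mul_of_nonneg_left _ h12
  calc ∑ C : Quotient s, |Pushforward s μ C - Pushforward s ν C|
      ≤ ∑ C : Quotient s,
          ∑ z ∈ Finset.univ.filter (fun z => Quotient.mk s z = C), |μ z - ν z| := by
        refine Finset.sum_le_sum fun C _ => ?_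
        rw [Pushforward, Pushforward, ← Finset.sum_sub_distrib]
        exact Finset.abs_sum_le_sum_abs _ _
    _ = ∑ z, |μ z - ν z| := Finset.sum_fiberwise _ _ _

/-- the total variation distance of the `t`-step distribution of the
projected chain from the pushforward of `π` is at most that of the original chain
from `π`. -/
theorem dV_proj_le
    [Fintype Ω] [DecidableEq Ω] (s : Setoid Ω) [DecidableEq (Quotient s)]
    [Fintype (Quotient s)]
    (P : Ω → Ω → ℝ)
    (hP0 : ∀ x y, 0 ≤ P x y) (hP1 : ∀ x, ∑ y, P x y = 1)
    (hlump : IsLumpable s P)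
    (π : Ω → ℝ) (hπ0 : ∀ x, 0 ≤ π x) (hπ1 : ∑ x, π x = 1) :
    ∀ (x : Ω) (t : ℕ),
      dV ((Step P)^[t] (onePoint x)) π ≥
        dV ((Step (Proj s P))^[t] (onePoint (Quotient.mk s x))) (Pushforward s π) := by
  intro x t
  have hpush : Pushforward s ((Step P)^[t] (onePoint x)) =
      (Step (Proj s P))^[t] (onePoint (Quotient.mk s x)) := by
    induction t with
    | zero => simpa using pushforward_onePoint s x
    | succ n ih =>
        rw [Function.iterate_succ_apply', Function.iterate_succ_apply',
          pushforward_step s P hlump, ih]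
  rw [ge_iff_le, ← hpush]
  exact dV_pushforward_le s _ _
end
end

section
/- Let P be a symmetric transition matrix on a finite state space Ω (P x y = P y x for all x, y) satisfying the lumpability condition with respect to an equivalence relation ∼. If a probability distribution μ on Ω is the lift of a distribution μ̄ on the quotient, i.e. μ(x) = μ̄([x]) / |[x]| for all x, then its one-step evolution is the lift of the one-step evolution of μ̄ under the projected matrix: (μP)(y) = (μ̄ P̄)([y]) / |[y]| for all y ∈ Ω. -/
open Finset

noncomputable section

variable {Ω : Type*}

/-- The size of the equivalence class of `x`. -/
def classCard (s : Setoid Ω) [Fintype Ω] [DecidableEq (Quotient s)] (x : Ω) : ℕ :=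
  (Finset.univ.filter (fun z => Quotient.mk s z = Quotient.mk s x)).card

/-- The lift of a distribution `μ` on the quotient to `Ω`. -/
def liftDist (s : Setoid Ω) [Fintype Ω] [DecidableEq (Quotient s)]
    (μ : Quotient s → ℝ) : Ω → ℝ :=
  fun x => μ (Quotient.mk s x) / (classCard s x : ℝ)


-- Auxiliary lemmas

def Qcard (s : Setoid Ω) [Fintype Ω] [DecidableEq (Quotient s)] (C : Quotient s) : ℕ :=
  (Finset.univ.filter (fun z => Quotient.mk s z = C)).card

lemma Qcard_pos (s : Setoid Ω) [Fintype Ω] [DecidableEq (Quotient s)] (C : Quotient s) :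
    0 < Qcard s C := by
  apply Finset.card_pos.mpr
  exact ⟨C.out, by simp [Quotient.out_eq]⟩

lemma classCard_eq (s : Setoid Ω) [Fintype Ω] [DecidableEq (Quotient s)] (x : Ω) :
    classCard s x = Qcard s (Quotient.mk s x) := rfl

lemma push_eq_proj (s : Setoid Ω) [Fintype Ω] [DecidableEq (Quotient s)]
    (P : Ω → Ω → ℝ) (hlump : IsLumpable s P) (x : Ω) (C : Quotient s) :
    Pushforward s (P x) C = Proj s P (Quotient.mk s x) C := by
  apply hlump
  have := Quotient.mk_out (s := s) x
  exact Setoid.symm this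

lemma balance (s : Setoid Ω) [Fintype Ω] [DecidableEq (Quotient s)]
    (P : Ω → Ω → ℝ) (hsym : ∀ x y, P x y = P y x) (hlump : IsLumpable s P)
    (C D : Quotient s) :
    (Qcard s C : ℝ) * Proj s P C D = (Qcard s D : ℝ) * Proj s P D C := by
  have key : ∀ C D : Quotient s, (Qcard s C : ℝ) * Proj s P C D =
      ∑ x ∈ Finset.univ.filter (fun z => Quotient.mk s z = C),
        ∑ z ∈ Finset.univ.filter (fun z => Quotient.mk s z = D), P x z := by
    intro C D
    rw [Qcard, Finset.cast_card]
    rw [Finset.sum_mul]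
    apply Finset.sum_congr rfl
    intro x hx
    simp only [Finset.mem_filter] at hx
    rw [one_mul, ← hx.2, ← push_eq_proj s P hlump]
    rfl
  rw [key, key]
  rw [Finset.sum_comm]
  exact Finset.sum_congr rfl fun x _ => Finset.sum_congr rfl fun z _ => hsym _ _

/-- for a symmetric lumpable transition matrix, the one-step evolution of
a lifted distribution is the lift of the one-step evolution under the projected matrix:
`(μP)(y) = (μ̄P̄)([y]) / |[y]|`. -/
theorem step_liftDist
    [Fintype Ω] (s : Setoid Ω) [DecidableEq (Quotient s)] [Fintype (Quotient s)]
    (P : Ω → Ω → ℝ)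
    (hP0 : ∀ x y, 0 ≤ P x y) (hP1 : ∀ x, ∑ y, P x y = 1)
    (hsym : ∀ x y, P x y = P y x)
    (hlump : IsLumpable s P)
    (μbar : Quotient s → ℝ) (hμ0 : ∀ C, 0 ≤ μbar C) (hμ1 : ∑ C, μbar C = 1)
    (μ : Ω → ℝ) (hμ : ∀ x, μ x = liftDist s μbar x) :
    ∀ y : Ω, Step P μ y = liftDist s (Step (Proj s P) μbar) y := by
  intro y
  have hy : (Qcard s (Quotient.mk s y) : ℝ) ≠ 0 := by
    exact_mod_cast (Qcard_pos s _).ne'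
  rw [Step]
  have split : ∑ x, μ x * P x y =
      ∑ C : Quotient s, ∑ x ∈ Finset.univ.filter (fun z => Quotient.mk s z = C),
        μ x * P x y := by
    rw [Finset.sum_fiberwise]
  rw [split]
  rw [liftDist, Step, classCard_eq]
  rw [Finset.sum_div]
  apply Finset.sum_congr rfl
  intro C _
  have inner : ∑ x ∈ Finset.univ.filter (fun z => Quotient.mk s z = C), μ x * P x y
      = μbar C / (Qcard s C : ℝ) * Proj s P (Quotient.mk s y) C := by
    have : ∀ x ∈ Finset.univ.filter (fun z => Quotient.mk s z = C),
        μ x * P x y = μbar C / (Qcard s C : ℝ) * P y x := by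
      intro x hx
      simp only [Finset.mem_filter] at hx
      rw [hμ x, liftDist, classCard_eq, hx.2, hsym x y]
    rw [Finset.sum_congr rfl this, ← Finset.mul_sum]
    congr 1
    rw [← push_eq_proj s P hlump]
    rfl
  rw [inner]
  have hC : (Qcard s C : ℝ) ≠ 0 := by exact_mod_cast (Qcard_pos s C).ne'
  have hb := balance s P hsym hlump (Quotient.mk s y) C
  rw [div_mul_eq_mul_div, div_eq_div_iff hC hy]
  linear_combination μbar C * hb
end
end

section
/- Every trade is a sequence of switches: let A and B be m×n 0-1 matrices with identical row sums (for every row index i, the i-th row sums of A and B are equal) and identical column sums, and suppose A and B agree on all rows except possibly two rows i and j. Then there is a finite sequence of matrices A = M₀, M₁, …, M_N = B such that each M_{t+1} is obtained from M_t by a switch. -/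
open Finset

/-- `B` is obtained from `A` by a single switch. -/
def IsSwitch {m n : ℕ} (A B : Fin m → Fin n → ℕ) : Prop :=
  ∃ (i k : Fin m) (j l : Fin n), i ≠ k ∧ j ≠ l ∧
    A i j = 1 ∧ A k l = 1 ∧ A i l = 0 ∧ A k j = 0 ∧
    B i j = 0 ∧ B k l = 0 ∧ B i l = 1 ∧ B k j = 1 ∧
    ∀ p q, (p, q) ∉ ({(i, j), (k, l), (i, l), (k, j)} : Set (Fin m × Fin n)) →
      B p q = A p q

lemma pair_sum_iff {α : Type*} [Fintype α] [DecidableEq α] (f g : α → ℕ) (a b : α)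
    (hab : a ≠ b) (h : ∀ q, q ≠ a → q ≠ b → f q = g q) :
    (∑ q, f q = ∑ q, g q) ↔ f a + f b = g a + g b := by
  classical
  rw [← Finset.sum_compl_add_sum ({a, b} : Finset α) f,
      ← Finset.sum_compl_add_sum ({a, b} : Finset α) g,
      Finset.sum_pair hab, Finset.sum_pair hab]
  have hc : ∑ q ∈ ({a, b} : Finset α)ᶜ, f q = ∑ q ∈ ({a, b} : Finset α)ᶜ, g q := by
    apply Finset.sum_congr rfl
    intro q hq
    simp only [Finset.mem_compl, Finset.mem_insert, Finset.mem_singleton, not_or] at hq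
    exact h q hq.1 hq.2
  rw [hc, add_right_inj]

lemma single_sum_iff {α : Type*} [Fintype α] [DecidableEq α] (f g : α → ℕ) (a : α)
    (h : ∀ q, q ≠ a → f q = g q) :
    (∑ q, f q = ∑ q, g q) ↔ f a = g a := by
  classical
  rw [← Finset.sum_compl_add_sum ({a} : Finset α) f,
      ← Finset.sum_compl_add_sum ({a} : Finset α) g,
      Finset.sum_singleton, Finset.sum_singleton]
  have hc : ∑ q ∈ ({a} : Finset α)ᶜ, f q = ∑ q ∈ ({a} : Finset α)ᶜ, g q := by
    apply Finset.sum_congr rfl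
    intro q hq
    simp only [Finset.mem_compl, Finset.mem_singleton] at hq
    exact h q hq
  rw [hc, add_right_inj]

/-- every trade is a sequence of switches: if two 0-1 matrices have the
same row sums and column sums and agree on all rows except possibly the two rows `i`
and `j`, then one can be transformed into the other by a finite sequence of
switches. -/
theorem trade_is_sequence_of_switches {m n : ℕ} (A B : Fin m → Fin n → ℕ)
    (hA01 : ∀ p q, A p q = 0 ∨ A p q = 1)
    (hB01 : ∀ p q, B p q = 0 ∨ B p q = 1)
    (hrow : ∀ p, ∑ q, A p q = ∑ q, B p q)
    (hcol : ∀ q, ∑ p, A p q = ∑ p, B p q)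
    (i j : Fin m)
    (hrows : ∀ p, p ≠ i → p ≠ j → ∀ q, A p q = B p q) :
    Relation.ReflTransGen IsSwitch A B := by
  classical
  suffices h : ∀ N (A : Fin m → Fin n → ℕ),
      (∀ p q, A p q = 0 ∨ A p q = 1) →
      (∀ p, ∑ q, A p q = ∑ q, B p q) →
      (∀ q, ∑ p, A p q = ∑ p, B p q) →
      (∀ p, p ≠ i → p ≠ j → ∀ q, A p q = B p q) →
      (univ.filter fun q => A i q ≠ B i q).card ≤ N →
      Relation.ReflTransGen IsSwitch A B by
    exact h _ A hA01 hrow hcol hrows le_rfl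
  intro N
  induction N with
  | zero =>
    intro A hA01 hrow hcol hrows hcard
    have hD : (univ.filter fun q => A i q ≠ B i q) = ∅ := by
      exact Finset.card_eq_zero.mp (Nat.le_zero.mp hcard)
    have hiq : ∀ q, A i q = B i q := by
      intro q
      by_contra hne
      have : q ∈ (univ.filter fun q => A i q ≠ B i q) := by
        simp [hne]
      simp [hD] at this
    have hjq : ∀ q, A j q = B j q := by
      intro q
      by_cases hji : j = i
      · rw [hji]; exact hiq q
      · have := (pair_sum_iff (fun p => A p q) (fun p => B p q) i j (Ne.symm hji)
          (fun p h1 h2 => hrows p h1 h2 q)).mp (hcol q)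
        have h1 := hiq q
        omega
    have : A = B := by
      funext p q
      by_cases hpi : p = i
      · rw [hpi]; exact hiq q
      · by_cases hpj : p = j
        · rw [hpj]; exact hjq q
        · exact hrows p hpi hpj q
    rw [this]
  | succ N ih =>
    intro A hA01 hrow hcol hrows hcard
    by_cases hle : (univ.filter fun q => A i q ≠ B i q).card ≤ N
    · exact ih A hA01 hrow hcol hrows hle
    · push_neg at hle
      have hDne : (univ.filter fun q => A i q ≠ B i q).Nonempty :=
        Finset.card_pos.mp (by omega)
      -- i ≠ j
      have hij : i ≠ j := by
        intro hij
        obtain ⟨q, hq⟩ := hDne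
        simp only [Finset.mem_filter] at hq
        apply hq.2
        have := (single_sum_iff (fun p => A p q) (fun p => B p q) i
          (fun p h1 => hrows p h1 (by rw [← hij]; exact h1) q)).mp (hcol q)
        exact this
      have hpair : ∀ q, A i q + A j q = B i q + B j q := fun q =>
        (pair_sum_iff (fun p => A p q) (fun p => B p q) i j hij
          (fun p h1 h2 => hrows p h1 h2 q)).mp (hcol q)
      -- sums over the disagreement set are equal
      set D := (univ.filter fun q => A i q ≠ B i q) with hDdef
      have hDsum : ∑ q ∈ D, A i q = ∑ q ∈ D, B i q := by
        have hsplit := Finset.sum_filter_add_sum_filter_not univ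
          (fun q => A i q ≠ B i q) (fun q => A i q)
        have hsplit' := Finset.sum_filter_add_sum_filter_not univ
          (fun q => A i q ≠ B i q) (fun q => B i q)
        have hoff : ∑ q ∈ univ.filter (fun q => ¬A i q ≠ B i q), A i q
            = ∑ q ∈ univ.filter (fun q => ¬A i q ≠ B i q), B i q := by
          apply Finset.sum_congr rfl
          intro q hq
          simp only [Finset.mem_filter, not_not] at hq
          exact hq.2
        rw [← hDdef] at hsplit hsplit'
        have hr := hrow i
        omega
      -- find c1 with A i c1 = 1
      have hc1 : ∃ c1 ∈ D, A i c1 = 1 := by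
        by_contra hno
        push_neg at hno
        have hall : ∀ q ∈ D, A i q = 0 := by
          intro q hq
          rcases hA01 i q with h | h
          · exact h
          · exact absurd h (hno q hq)
        have h1 : ∑ q ∈ D, A i q = 0 := Finset.sum_eq_zero hall
        have h2 : ∑ q ∈ D, B i q = D.card := by
          rw [Finset.card_eq_sum_ones]
          apply Finset.sum_congr rfl
          intro q hq
          have hq' := hq
          simp only [hDdef, Finset.mem_filter] at hq'
          have := hall q hq
          rcases hB01 i q with h | h
          · omega
          · exact h
        omega
      have hc2 : ∃ c2 ∈ D, A i c2 = 0 := by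
        by_contra hno
        push_neg at hno
        have hall : ∀ q ∈ D, A i q = 1 := by
          intro q hq
          rcases hA01 i q with h | h
          · exact absurd h (hno q hq)
          · exact h
        have h1 : ∑ q ∈ D, A i q = D.card := by
          rw [Finset.card_eq_sum_ones]
          exact Finset.sum_congr rfl hall
        have h2 : ∑ q ∈ D, B i q = 0 := by
          apply Finset.sum_eq_zero
          intro q hq
          have hq' := hq
          simp only [hDdef, Finset.mem_filter] at hq'
          have := hall q hq
          rcases hB01 i q with h | h
          · exact h
          · omega
        omega
      obtain ⟨c1, hc1D, hAic1⟩ := hc1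
      obtain ⟨c2, hc2D, hAic2⟩ := hc2
      have hc1D' := hc1D; have hc2D' := hc2D
      simp only [hDdef, Finset.mem_filter] at hc1D' hc2D'
      have hBic1 : B i c1 = 0 := by rcases hB01 i c1 with h | h; exact h; exact absurd (hAic1.trans h.symm) hc1D'.2
      have hBic2 : B i c2 = 1 := by rcases hB01 i c2 with h | h; exact absurd (hAic2.trans h.symm) hc2D'.2; exact h
      have hAjc1 : A j c1 = 0 := by have := hpair c1; have := hA01 j c1; have := hB01 j c1; omega
      have hBjc1 : B j c1 = 1 := by have := hpair c1; omega
      have hAjc2 : A j c2 = 1 := by have := hpair c2; have := hA01 j c2; have := hB01 j c2; omega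
      have hBjc2 : B j c2 = 0 := by have := hpair c2; omega
      have hc12 : c1 ≠ c2 := by intro h; rw [h] at hAic1; omega
      -- the switched matrix
      set A' : Fin m → Fin n → ℕ := fun p q =>
        if p = i ∧ q = c1 then 0 else if p = i ∧ q = c2 then 1
        else if p = j ∧ q = c1 then 1 else if p = j ∧ q = c2 then 0
        else A p q with hA'def
      have hA'ic1 : A' i c1 = 0 := by simp [hA'def]
      have hA'ic2 : A' i c2 = 1 := by simp [hA'def, hc12.symm]
      have hA'jc1 : A' j c1 = 1 := by simp [hA'def, hij.symm]
      have hA'jc2 : A' j c2 = 0 := by simp [hA'def, hij.symm, hc12.symm]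
      have hA'off : ∀ p q, (p ≠ i ∧ p ≠ j) ∨ (q ≠ c1 ∧ q ≠ c2) → A' p q = A p q := by
        intro p q hpq
        simp only [hA'def]
        split_ifs with h1 h2 h3 h4 <;> first | rfl | (exfalso; tauto)
      have hA'01 : ∀ p q, A' p q = 0 ∨ A' p q = 1 := by
        intro p q
        simp only [hA'def]
        split_ifs <;> first | (left; rfl) | (right; rfl) | exact hA01 p q
      clear_value A'
      -- the switch
      have hstep : IsSwitch A A' := by
        refine ⟨i, j, c1, c2, hij, hc12, hAic1, hAjc2, hAic2, hAjc1,
          hA'ic1, hA'jc2, hA'ic2, hA'jc1, ?_⟩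
        intro p q hpq
        simp only [Set.mem_insert_iff, Set.mem_singleton_iff, not_or, Prod.mk.injEq] at hpq
        apply hA'off
        by_cases hp : p = i ∨ p = j
        · right
          rcases hp with hp | hp <;> subst hp <;>
            · constructor <;> intro hq <;> subst hq <;> tauto
        · left; tauto
      -- hypotheses for A'
      have hA'row : ∀ p, ∑ q, A' p q = ∑ q, B p q := by
        intro p
        by_cases hpi : p = i
        · subst hpi
          rw [(pair_sum_iff (fun q => A' p q) (fun q => A p q) c1 c2 hc12
            (fun q h1 h2 => hA'off p q (Or.inr ⟨h1, h2⟩))).mpr (by omega)]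
          exact hrow p
        · by_cases hpj : p = j
          · subst hpj
            rw [(pair_sum_iff (fun q => A' p q) (fun q => A p q) c1 c2 hc12
              (fun q h1 h2 => hA'off p q (Or.inr ⟨h1, h2⟩))).mpr (by omega)]
            exact hrow p
          · rw [Finset.sum_congr rfl (fun q _ => hA'off p q (Or.inl ⟨hpi, hpj⟩))]
            exact hrow p
      have hA'col : ∀ q, ∑ p, A' p q = ∑ p, B p q := by
        intro q
        by_cases hqc1 : q = c1
        · subst hqc1
          rw [(pair_sum_iff (fun p => A' p q) (fun p => A p q) i j hij
            (fun p h1 h2 => hA'off p q (Or.inl ⟨h1, h2⟩))).mpr (by omega)]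
          exact hcol q
        · by_cases hqc2 : q = c2
          · subst hqc2
            rw [(pair_sum_iff (fun p => A' p q) (fun p => A p q) i j hij
              (fun p h1 h2 => hA'off p q (Or.inl ⟨h1, h2⟩))).mpr (by omega)]
            exact hcol q
          · rw [Finset.sum_congr rfl (fun p _ => hA'off p q (Or.inr ⟨hqc1, hqc2⟩))]
            exact hcol q
      have hA'rows : ∀ p, p ≠ i → p ≠ j → ∀ q, A' p q = B p q := by
        intro p h1 h2 q
        rw [hA'off p q (Or.inl ⟨h1, h2⟩)]
        exact hrows p h1 h2 q
      have hA'card : (univ.filter fun q => A' i q ≠ B i q).card ≤ N := by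
        have hsub : (univ.filter fun q => A' i q ≠ B i q) ⊆ D.erase c1 := by
          intro q hq
          simp only [Finset.mem_filter, Finset.mem_univ, true_and] at hq
          have hq1 : q ≠ c1 := by intro h; subst h; omega
          have hq2 : q ≠ c2 := by intro h; subst h; omega
          rw [Finset.mem_erase]
          refine ⟨hq1, ?_⟩
          simp only [hDdef, Finset.mem_filter, Finset.mem_univ, true_and]
          rwa [← hA'off i q (Or.inr ⟨hq1, hq2⟩)]
        have h1 := Finset.card_le_card hsub
        have h2 := Finset.card_erase_of_mem hc1D
        omega
      exact Relation.ReflTransGen.head hstep (ih A' hA'01 hA'row hA'col hA'rows hA'card)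
end

section
/- The switch chain with degree-preserving relabelling is connected on simple directed graphs (no hexagonal moves are needed): let A and B be n×n 0-1 matrices with zero diagonal such that for every index i the i-th row sums of A and B agree and the i-th column sums of A and B agree. Then there is a finite sequence A = M₀, M₁, …, M_N = B of n×n 0-1 matrices with zero diagonal in which each M_{t+1} is obtained from M_t either (a) by a switch whose result again has zero diagonal, or (b) by a relabelling M_{t+1} i j = M_t (ρ i) (ρ j) for some permutation ρ of {1,…,n} that preserves degrees, i.e. for every i the row sum of row ρ(i) of M_t equals the row sum of row i of M_t and the column sum of column ρ(i) of M_t equals the column sum of column i of M_t. -/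
open Finset

/-- One step of the switch chain with degree-preserving relabelling on adjacency
matrices of simple directed graphs: either a switch whose result again has zero
diagonal, or a relabelling of the nodes by a permutation preserving in- and
out-degrees. -/
def DirectedStep {n : ℕ} (M M' : Fin n → Fin n → ℕ) : Prop :=
  (IsSwitch M M' ∧ ∀ i, M' i i = 0) ∨
  (∃ ρ : Equiv.Perm (Fin n),
      (∀ i j, M' i j = M (ρ i) (ρ j)) ∧
      (∀ i, ∑ j, M (ρ i) j = ∑ j, M i j) ∧
      (∀ i, ∑ j, M j (ρ i) = ∑ j, M j i))


section SwitchAux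
variable {n : ℕ}

def Dset (A B : Fin n → Fin n → ℕ) : Finset (Fin n × Fin n) :=
  Finset.univ.filter fun z => A z.1 z.2 ≠ B z.1 z.2

def Tr (M : Fin n → Fin n → ℕ) : Fin n → Fin n → ℕ := fun p q => M q p

def Val {n : ℕ} (M : Fin n → Fin n → ℕ) : Prop := (∀ i j, M i j = 0 ∨ M i j = 1) ∧ (∀ i, M i i = 0)

lemma exists_gt_of_sum_eq {α : Type*} [Fintype α] [DecidableEq α] {f g : α → ℕ}
    (h : ∑ x, f x = ∑ x, g x) {a : α} (ha : f a < g a) :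
    ∃ b, b ≠ a ∧ g b < f b := by
  by_contra hc
  push_neg at hc
  have hle : ∀ i ∈ Finset.univ, f i ≤ g i := by
    intro i _
    by_cases hia : i = a
    · exact le_of_lt (hia ▸ ha)
    · exact hc i hia
  have hlt : ∑ x, f x < ∑ x, g x := Finset.sum_lt_sum hle ⟨a, Finset.mem_univ a, ha⟩
  omega

lemma sum2 {f g : Fin n → ℕ} {j l : Fin n} (hjl : j ≠ l)
    (hoff : ∀ x, x ≠ j → x ≠ l → f x = g x) (h : f j + f l = g j + g l) :
    ∑ x, f x = ∑ x, g x := by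
  have hjm : j ∈ (univ : Finset (Fin n)) := mem_univ j
  have hlm : l ∈ (univ.erase j) := by simp [Finset.mem_erase, hjl.symm]
  have e : ∀ h : Fin n → ℕ, ∑ x, h x = h j + (h l + ∑ x ∈ (univ.erase j).erase l, h x) := by
    intro h
    rw [Finset.add_sum_erase _ _ hlm, Finset.add_sum_erase _ _ hjm]
  rw [e f, e g]
  have hrest : ∑ x ∈ (univ.erase j).erase l, f x = ∑ x ∈ (univ.erase j).erase l, g x := by
    refine Finset.sum_congr rfl fun x hx => ?_
    simp only [Finset.mem_erase] at hx
    exact hoff x hx.2.1 hx.1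
  omega

lemma sum3 {f g : Fin n → ℕ} {i j l : Fin n} (hij : i ≠ j) (hil : i ≠ l) (hjl : j ≠ l)
    (hoff : ∀ x, x ≠ i → x ≠ j → x ≠ l → f x = g x)
    (h : f i + f j + f l = g i + g j + g l) : ∑ x, f x = ∑ x, g x := by
  have him : i ∈ (univ : Finset (Fin n)) := mem_univ i
  have hjm : j ∈ (univ.erase i) := by simp [Finset.mem_erase, hij.symm]
  have hlm : l ∈ ((univ.erase i).erase j) := by simp [Finset.mem_erase, hjl.symm, hil.symm]
  have e : ∀ h : Fin n → ℕ, ∑ x, h x = h i + (h j + (h l + ∑ x ∈ ((univ.erase i).erase j).erase l, h x)) := by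
    intro h
    rw [Finset.add_sum_erase _ _ hlm, Finset.add_sum_erase _ _ hjm, Finset.add_sum_erase _ _ him]
  rw [e f, e g]
  have hrest : ∑ x ∈ ((univ.erase i).erase j).erase l, f x
      = ∑ x ∈ ((univ.erase i).erase j).erase l, g x := by
    refine Finset.sum_congr rfl fun x hx => ?_
    simp only [Finset.mem_erase] at hx
    exact hoff x hx.2.2.1 hx.2.1 hx.1
  omega

lemma split01 {u v : Fin n → ℕ} (hu : ∀ k, u k = 0 ∨ u k = 1) (hv : ∀ k, v k = 0 ∨ v k = 1) :
    ∑ k, v k = (univ.filter fun k => u k = 0 ∧ v k = 1).card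
      + (univ.filter fun k => u k = 1 ∧ v k = 1).card := by
  have h1 : ∑ k, v k = (univ.filter fun k => v k = 1).card := by
    rw [Finset.card_filter]
    refine Finset.sum_congr rfl fun k _ => ?_
    rcases hv k with h | h <;> simp [h]
  rw [h1, ← Finset.card_union_of_disjoint]
  · congr 1
    ext k
    simp only [Finset.mem_union, Finset.mem_filter, Finset.mem_univ, true_and]
    rcases hu k with h | h <;> simp [h]
  · simp only [Finset.disjoint_left, Finset.mem_filter, Finset.mem_univ, true_and]
    rintro a ⟨h0, -⟩ ⟨h1', -⟩
    omega

lemma card_lt_aux {α : Type*} [DecidableEq α] {D D' : Finset α} {a b c w : α}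
    (hab : a ≠ b) (hac : a ≠ c) (hbc : b ≠ c)
    (ha : a ∈ D) (hb : b ∈ D) (hc : c ∈ D)
    (hsub : D' ⊆ (D \ {a, b, c}) ∪ {w}) : D'.card < D.card := by
  have h3 : ({a, b, c} : Finset α).card = 3 := by
    rw [Finset.card_insert_of_notMem (by simp [hab, hac]),
      Finset.card_insert_of_notMem (by simp [hbc]), Finset.card_singleton]
  have hsD : ({a, b, c} : Finset α) ⊆ D := by
    intro t ht
    simp only [Finset.mem_insert, Finset.mem_singleton] at ht
    rcases ht with rfl | rfl | rfl <;> assumption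
  have h1 := Finset.card_le_card hsub
  have h2 := Finset.card_union_le (D \ {a, b, c}) ({w} : Finset α)
  rw [Finset.card_sdiff_of_subset hsD] at h2
  have h4 := Finset.card_le_card hsD
  rw [h3] at h4
  simp only [Finset.card_singleton] at h2
  omega

lemma switch_step (A : Fin n → Fin n → ℕ) (hV : Val A) (i k j l : Fin n)
    (hik : i ≠ k) (hjl : j ≠ l) (hil : i ≠ l) (hkj : k ≠ j)
    (h1 : A i j = 1) (h2 : A k l = 1) (h3 : A i l = 0) (h4 : A k j = 0) :
    ∃ A' : Fin n → Fin n → ℕ, DirectedStep A A' ∧ Val A' ∧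
      (∀ p, ∑ q, A' p q = ∑ q, A p q) ∧ (∀ q, ∑ p, A' p q = ∑ p, A p q) ∧
      A' i j = 0 ∧ A' k l = 0 ∧ A' i l = 1 ∧ A' k j = 1 ∧
      (∀ p q, (p ≠ i ∨ q ≠ j) → (p ≠ k ∨ q ≠ l) → (p ≠ i ∨ q ≠ l) → (p ≠ k ∨ q ≠ j) →
        A' p q = A p q) := by
  have hij : i ≠ j := by rintro rfl; rw [hV.2 i] at h1; omega
  have hkl : k ≠ l := by rintro rfl; rw [hV.2 k] at h2; omega
  set A' : Fin n → Fin n → ℕ := fun p q =>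
    if p = i ∧ q = j then 0 else if p = k ∧ q = l then 0
    else if p = i ∧ q = l then 1 else if p = k ∧ q = j then 1 else A p q with hA'
  have eij : A' i j = 0 := by simp [hA']
  have ekl : A' k l = 0 := by simp [hA', hik.symm]
  have eil : A' i l = 1 := by simp [hA', hjl.symm, hik]
  have ekj : A' k j = 1 := by simp [hA', hik.symm, hjl]
  have off4 : ∀ p q, (p ≠ i ∨ q ≠ j) → (p ≠ k ∨ q ≠ l) → (p ≠ i ∨ q ≠ l) → (p ≠ k ∨ q ≠ j) →
      A' p q = A p q := by
    intro p q o1 o2 o3 o4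
    have n1 : ¬(p = i ∧ q = j) := by tauto
    have n2 : ¬(p = k ∧ q = l) := by tauto
    have n3 : ¬(p = i ∧ q = l) := by tauto
    have n4 : ¬(p = k ∧ q = j) := by tauto
    simp [hA', n1, n2, n3, n4]
  have hval : Val A' := by
    constructor
    · intro p q
      simp only [hA']
      split_ifs <;> simp [hV.1 p q]
    · intro p
      have n1 : ¬(p = i ∧ p = j) := by rintro ⟨rfl, rfl⟩; exact hij rfl
      have n2 : ¬(p = k ∧ p = l) := by rintro ⟨rfl, rfl⟩; exact hkl rfl
      have n3 : ¬(p = i ∧ p = l) := by rintro ⟨rfl, rfl⟩; exact hil rfl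
      have n4 : ¬(p = k ∧ p = j) := by rintro ⟨rfl, rfl⟩; exact hkj rfl
      simp [hA', n1, n2, n3, n4, hV.2 p]
  have hrows : ∀ p, ∑ q, A' p q = ∑ q, A p q := by
    intro p
    by_cases hp : p = i
    · subst hp
      refine sum2 hjl (fun x hx1 hx2 => off4 p x (Or.inr hx1) (Or.inl hik) (Or.inr hx2) (Or.inl hik)) ?_
      rw [eij, eil, h1, h3]
    · by_cases hp2 : p = k
      · subst hp2
        refine sum2 hjl (fun x hx1 hx2 => off4 p x (Or.inl hik.symm) (Or.inr hx2) (Or.inl hik.symm) (Or.inr hx1)) ?_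
        rw [ekj, ekl, h2, h4]
      · exact Finset.sum_congr rfl fun q _ =>
          off4 p q (Or.inl hp) (Or.inl hp2) (Or.inl hp) (Or.inl hp2)
  have hcols : ∀ q, ∑ p, A' p q = ∑ p, A p q := by
    intro q
    by_cases hq : q = j
    · subst hq
      refine sum2 hik (fun x hx1 hx2 => off4 x q (Or.inl hx1) (Or.inr hjl) (Or.inr hjl) (Or.inl hx2)) ?_
      rw [eij, ekj, h1, h4]
    · by_cases hq2 : q = l
      · subst hq2
        refine sum2 hik (fun x hx1 hx2 => off4 x q (Or.inr hjl.symm) (Or.inl hx2) (Or.inl hx1) (Or.inr hjl.symm)) ?_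
        rw [eil, ekl, h2, h3]
      · exact Finset.sum_congr rfl fun p _ =>
          off4 p q (Or.inr hq) (Or.inr hq2) (Or.inr hq2) (Or.inr hq)
  refine ⟨A', Or.inl ⟨⟨i, k, j, l, hik, hjl, h1, h2, h3, h4, eij, ekl, eil, ekj, ?_⟩, hval.2⟩,
    hval, hrows, hcols, eij, ekl, eil, ekj, off4⟩
  intro p q hm
  simp only [Set.mem_insert_iff, Set.mem_singleton_iff, Prod.mk.injEq, not_or] at hm
  obtain ⟨m1, m2, m3, m4⟩ := hm
  exact off4 p q (not_and_or.mp m1) (not_and_or.mp m2) (not_and_or.mp m3) (not_and_or.mp m4)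

lemma step_symm {A B : Fin n → Fin n → ℕ} (hA : ∀ p, A p p = 0) (h : DirectedStep A B) :
    DirectedStep B A := by
  rcases h with ⟨⟨i, k, j, l, hik, hjl, a1, a2, a3, a4, b1, b2, b3, b4, hoff⟩, -⟩ | ⟨ρ, hfor, hr, hc⟩
  · refine Or.inl ⟨⟨i, k, l, j, hik, hjl.symm, b3, b4, b1, b2, a3, a4, a1, a2, ?_⟩, hA⟩
    intro p q hm
    simp only [Set.mem_insert_iff, Set.mem_singleton_iff, Prod.mk.injEq, not_or] at hm
    refine (hoff p q ?_).symm
    simp only [Set.mem_insert_iff, Set.mem_singleton_iff, Prod.mk.injEq, not_or]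
    tauto
  · refine Or.inr ⟨ρ.symm, ?_, ?_, ?_⟩
    · intro p q
      rw [hfor (ρ.symm p) (ρ.symm q), ρ.apply_symm_apply, ρ.apply_symm_apply]
    · intro v
      have e1 : ∑ y, B (ρ.symm v) y = ∑ y, A v (ρ y) := by
        refine Finset.sum_congr rfl fun y _ => ?_
        rw [hfor (ρ.symm v) y, ρ.apply_symm_apply]
      have e2 : ∑ y, B v y = ∑ y, A (ρ v) (ρ y) :=
        Finset.sum_congr rfl fun y _ => hfor v y
      rw [e1, e2, Equiv.sum_comp ρ (fun y => A v y), Equiv.sum_comp ρ (fun y => A (ρ v) y)]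
      exact (hr v).symm
    · intro v
      have e1 : ∑ y, B y (ρ.symm v) = ∑ y, A (ρ y) v := by
        refine Finset.sum_congr rfl fun y _ => ?_
        rw [hfor y (ρ.symm v), ρ.apply_symm_apply]
      have e2 : ∑ y, B y v = ∑ y, A (ρ y) (ρ v) :=
        Finset.sum_congr rfl fun y _ => hfor y v
      rw [e1, e2, Equiv.sum_comp ρ (fun y => A y v), Equiv.sum_comp ρ (fun y => A y (ρ v))]
      exact (hc v).symm

lemma step_tr {A B : Fin n → Fin n → ℕ} (h : DirectedStep A B) : DirectedStep (Tr A) (Tr B) := by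
  rcases h with ⟨⟨i, k, j, l, hik, hjl, a1, a2, a3, a4, b1, b2, b3, b4, hoff⟩, hd⟩ | ⟨ρ, hfor, hr, hc⟩
  · refine Or.inl ⟨⟨j, l, i, k, hjl, hik, a1, a2, a4, a3, b1, b2, b4, b3, ?_⟩, hd⟩
    intro p q hm
    simp only [Set.mem_insert_iff, Set.mem_singleton_iff, Prod.mk.injEq, not_or] at hm
    show B q p = A q p
    refine hoff q p ?_
    simp only [Set.mem_insert_iff, Set.mem_singleton_iff, Prod.mk.injEq, not_or]
    tauto
  · exact Or.inr ⟨ρ, fun p q => hfor q p, fun v => hc v, fun v => hr v⟩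

lemma chain_tr {A B : Fin n → Fin n → ℕ} (h : Relation.ReflTransGen DirectedStep A B) :
    Relation.ReflTransGen DirectedStep (Tr A) (Tr B) := by
  induction h with
  | refl => exact Relation.ReflTransGen.refl
  | tail _ hstep ih => exact ih.tail (step_tr hstep)

lemma dset_comm (A B : Fin n → Fin n → ℕ) : Dset A B = Dset B A := by
  ext z
  simp only [Dset, Finset.mem_filter, Finset.mem_univ, true_and]
  exact ne_comm

lemma dset_tr2 (A B : Fin n → Fin n → ℕ) : (Dset (Tr A) (Tr B)).card = (Dset A B).card := by
  refine Finset.card_bij' (fun z _ => (z.2, z.1)) (fun z _ => (z.2, z.1)) ?_ ?_ ?_ ?_ <;>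
    (simp only [Dset, Finset.mem_filter, Finset.mem_univ, true_and]; simp [Tr])

lemma dset_tr1 (A B : Fin n → Fin n → ℕ) : (Dset (Tr A) B).card = (Dset A (Tr B)).card := by
  refine Finset.card_bij' (fun z _ => (z.2, z.1)) (fun z _ => (z.2, z.1)) ?_ ?_ ?_ ?_ <;>
    (simp only [Dset, Finset.mem_filter, Finset.mem_univ, true_and]; simp [Tr, ne_comm])

lemma triple (A B : Fin n → Fin n → ℕ)
    (hA01 : ∀ p q, A p q = 0 ∨ A p q = 1) (hB01 : ∀ p q, B p q = 0 ∨ B p q = 1)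
    (hAd : ∀ p, A p p = 0) (hBd : ∀ p, B p p = 0)
    (i j l : Fin n) (hij : i ≠ j) (hil : i ≠ l) (hjl : j ≠ l)
    (hAij : A i j = 1) (hBij : B i j = 0) (hAil : A i l = 0) (hBil : B i l = 1)
    (hcj : ∑ k, A k j = ∑ k, B k j) (hcl : ∑ k, A k l = ∑ k, B k l) :
    (∃ k, k ≠ i ∧ k ≠ j ∧ A k l = 1 ∧ A k j = 0 ∧ ¬(B k l = 1 ∧ B k j = 0)) ∨
    (∃ k, k ≠ i ∧ k ≠ l ∧ B k j = 1 ∧ B k l = 0 ∧ ¬(A k j = 1 ∧ A k l = 0)) ∨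
    (A j l = 1 ∧ B j l = 0 ∧ A l j = 0 ∧ B l j = 1) := by
  rw [or_iff_not_imp_left, or_iff_not_imp_left]
  intro hG1 hG2
  push_neg at hG1 hG2
  classical
  -- card decompositions
  have eA1 : ∑ k, A k l = (univ.filter fun k => A k j = 0 ∧ A k l = 1).card
      + (univ.filter fun k => A k j = 1 ∧ A k l = 1).card :=
    split01 (fun k => hA01 k j) (fun k => hA01 k l)
  have eA2 : ∑ k, A k j = (univ.filter fun k => A k l = 0 ∧ A k j = 1).card
      + (univ.filter fun k => A k l = 1 ∧ A k j = 1).card :=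
    split01 (fun k => hA01 k l) (fun k => hA01 k j)
  have eB1 : ∑ k, B k l = (univ.filter fun k => B k j = 0 ∧ B k l = 1).card
      + (univ.filter fun k => B k j = 1 ∧ B k l = 1).card :=
    split01 (fun k => hB01 k j) (fun k => hB01 k l)
  have eB2 : ∑ k, B k j = (univ.filter fun k => B k l = 0 ∧ B k j = 1).card
      + (univ.filter fun k => B k l = 1 ∧ B k j = 1).card :=
    split01 (fun k => hB01 k l) (fun k => hB01 k j)
  have cA1 : (univ.filter fun k => A k l = 0 ∧ A k j = 1) = (univ.filter fun k => A k j = 1 ∧ A k l = 0) := by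
    ext k; simp only [Finset.mem_filter]; tauto
  have cA2 : (univ.filter fun k => A k l = 1 ∧ A k j = 1) = (univ.filter fun k => A k j = 1 ∧ A k l = 1) := by
    ext k; simp only [Finset.mem_filter]; tauto
  have cB1 : (univ.filter fun k => B k l = 0 ∧ B k j = 1) = (univ.filter fun k => B k j = 1 ∧ B k l = 0) := by
    ext k; simp only [Finset.mem_filter]; tauto
  have cB2 : (univ.filter fun k => B k l = 1 ∧ B k j = 1) = (univ.filter fun k => B k j = 1 ∧ B k l = 1) := by
    ext k; simp only [Finset.mem_filter]; tauto
  rw [cA1, cA2] at eA2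
  rw [cB1, cB2] at eB2
  -- inclusions
  have hsub1 : insert i ((univ.filter fun k => A k j = 0 ∧ A k l = 1).erase j)
      ⊆ (univ.filter fun k => B k j = 0 ∧ B k l = 1) := by
    intro k hk
    simp only [Finset.mem_insert, Finset.mem_erase, Finset.mem_filter, Finset.mem_univ,
      true_and] at hk ⊢
    rcases hk with rfl | ⟨hkj', hk0, hk1⟩
    · exact ⟨hBij, hBil⟩
    · have hki : k ≠ i := by rintro rfl; rw [hAil] at hk1; omega
      have := hG1 k hki hkj' hk1 hk0
      exact ⟨this.2, this.1⟩
  have hsub2 : insert i ((univ.filter fun k => B k j = 1 ∧ B k l = 0).erase l)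
      ⊆ (univ.filter fun k => A k j = 1 ∧ A k l = 0) := by
    intro k hk
    simp only [Finset.mem_insert, Finset.mem_erase, Finset.mem_filter, Finset.mem_univ,
      true_and] at hk ⊢
    rcases hk with rfl | ⟨hkl', hk1, hk0⟩
    · exact ⟨hAij, hAil⟩
    · have hki : k ≠ i := by rintro rfl; rw [hBij] at hk1; omega
      exact hG2 k hki hkl' hk1 hk0
  have hni1 : i ∉ (univ.filter fun k => A k j = 0 ∧ A k l = 1).erase j := by
    simp [Finset.mem_erase, hAil]
  have hni2 : i ∉ (univ.filter fun k => B k j = 1 ∧ B k l = 0).erase l := by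
    simp [Finset.mem_erase, hBij]
  have hb01 := Finset.card_le_card hsub1
  rw [Finset.card_insert_of_notMem hni1] at hb01
  have ha10 := Finset.card_le_card hsub2
  rw [Finset.card_insert_of_notMem hni2] at ha10
  have hpredA := Finset.pred_card_le_card_erase
    (s := univ.filter fun k => A k j = 0 ∧ A k l = 1) (a := j)
  have hpredB := Finset.pred_card_le_card_erase
    (s := univ.filter fun k => B k j = 1 ∧ B k l = 0) (a := l)
  -- first: A j l = 1
  have hjm : A j l = 1 := by
    by_contra hc
    have hjnot : j ∉ (univ.filter fun k => A k j = 0 ∧ A k l = 1) := by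
      simp only [Finset.mem_filter, Finset.mem_univ, true_and, not_and]
      intro _; exact hc
    rw [Finset.erase_eq_of_notMem hjnot] at hb01
    omega
  have hje : j ∈ (univ.filter fun k => A k j = 0 ∧ A k l = 1) := by
    simp [hAd j, hjm]
  have hposA : 0 < (univ.filter fun k => A k j = 0 ∧ A k l = 1).card :=
    Finset.card_pos.mpr ⟨j, hje⟩
  have hjerase := Finset.card_erase_of_mem hje
  -- second: B l j = 1
  have hlm : B l j = 1 := by
    by_contra hc
    have hlnot : l ∉ (univ.filter fun k => B k j = 1 ∧ B k l = 0) := by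
      simp only [Finset.mem_filter, Finset.mem_univ, true_and, not_and]
      intro h'; exact absurd h' hc
    rw [Finset.erase_eq_of_notMem hlnot] at ha10
    omega
  have hle : l ∈ (univ.filter fun k => B k j = 1 ∧ B k l = 0) := by
    simp [hBd l, hlm]
  have hposB : 0 < (univ.filter fun k => B k j = 1 ∧ B k l = 0).card :=
    Finset.card_pos.mpr ⟨l, hle⟩
  have hlerase := Finset.card_erase_of_mem hle
  -- third: B j l = 0
  have hBjl : B j l = 0 := by
    by_contra hc
    have hB1 : B j l = 1 := (hB01 j l).resolve_left hc
    have hsub' : insert j (insert i ((univ.filter fun k => A k j = 0 ∧ A k l = 1).erase j))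
        ⊆ (univ.filter fun k => B k j = 0 ∧ B k l = 1) := by
      intro k hk
      rcases Finset.mem_insert.mp hk with rfl | hk'
      · simp [hBd k, hB1]
      · exact hsub1 hk'
    have hjni : j ∉ insert i ((univ.filter fun k => A k j = 0 ∧ A k l = 1).erase j) := by
      simp [Finset.mem_insert, hij.symm]
    have hcard' := Finset.card_le_card hsub'
    rw [Finset.card_insert_of_notMem hjni, Finset.card_insert_of_notMem hni1] at hcard'
    omega
  -- fourth: A l j = 0
  have hAlj : A l j = 0 := by
    by_contra hc
    have hA1 : A l j = 1 := (hA01 l j).resolve_left hc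
    have hsub' : insert l (insert i ((univ.filter fun k => B k j = 1 ∧ B k l = 0).erase l))
        ⊆ (univ.filter fun k => A k j = 1 ∧ A k l = 0) := by
      intro k hk
      rcases Finset.mem_insert.mp hk with rfl | hk'
      · simp [hAd k, hA1]
      · exact hsub2 hk'
    have hlni : l ∉ insert i ((univ.filter fun k => B k j = 1 ∧ B k l = 0).erase l) := by
      simp [Finset.mem_insert, hil.symm]
    have hcard' := Finset.card_le_card hsub'
    rw [Finset.card_insert_of_notMem hlni, Finset.card_insert_of_notMem hni2] at hcard'
    omega
  exact ⟨hjm, hBjl, hAlj, hlm⟩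

lemma reduceA (A B : Fin n → Fin n → ℕ) (hVA : Val A) (hB01 : ∀ p q, B p q = 0 ∨ B p q = 1)
    (i k j l : Fin n) (hik : i ≠ k) (hjl : j ≠ l) (hil : i ≠ l) (hkj : k ≠ j)
    (hAij : A i j = 1) (hAkl : A k l = 1) (hAil : A i l = 0) (hAkj : A k j = 0)
    (hBij : B i j = 0) (hBil : B i l = 1) (hgood : ¬(B k l = 1 ∧ B k j = 0)) :
    ∃ A', DirectedStep A A' ∧ Val A' ∧ (∀ p, ∑ q, A' p q = ∑ q, A p q) ∧
      (∀ q, ∑ p, A' p q = ∑ p, A p q) ∧ (Dset A' B).card < (Dset A B).card := by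
  obtain ⟨A', hstep, hval, hr, hc, e1, e2, e3, e4, hoff⟩ :=
    switch_step A hVA i k j l hik hjl hil hkj hAij hAkl hAil hAkj
  refine ⟨A', hstep, hval, hr, hc, ?_⟩
  have hmem1 : (i, j) ∈ Dset A B := by simp [Dset, hAij, hBij]
  have hmem2 : (i, l) ∈ Dset A B := by simp [Dset, hAil, hBil]
  have hd12 : ((i, j) : Fin n × Fin n) ≠ (i, l) := by simp [Prod.ext_iff, hjl]
  by_cases hBkl : B k l = 1
  · have hBkj : B k j = 1 := by
      rcases hB01 k j with h' | h'
      · exact absurd ⟨hBkl, h'⟩ hgood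
      · exact h'
    have hmem3 : (k, j) ∈ Dset A B := by simp [Dset, hAkj, hBkj]
    refine card_lt_aux (w := ((k, l) : Fin n × Fin n)) hd12
      (by simp [Prod.ext_iff, hik]) (by simp [Prod.ext_iff, hik]) hmem1 hmem2 hmem3 ?_
    intro z hz
    obtain ⟨x, y⟩ := z
    simp only [Dset, Finset.mem_filter, Finset.mem_univ, true_and] at hz
    by_cases hw : x = k ∧ y = l
    · refine Finset.mem_union_right _ ?_
      obtain ⟨rfl, rfl⟩ := hw
      exact Finset.mem_singleton_self _
    · refine Finset.mem_union_left _ (Finset.mem_sdiff.mpr ⟨?_, ?_⟩)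
      · have hxa : ¬(x = i ∧ y = j) := by rintro ⟨rfl, rfl⟩; rw [e1, hBij] at hz; exact hz rfl
        have hxb : ¬(x = i ∧ y = l) := by rintro ⟨rfl, rfl⟩; rw [e3, hBil] at hz; exact hz rfl
        have hxc : ¬(x = k ∧ y = j) := by rintro ⟨rfl, rfl⟩; rw [e4, hBkj] at hz; exact hz rfl
        have heq : A' x y = A x y := hoff x y (not_and_or.mp hxa) (not_and_or.mp hw)
          (not_and_or.mp hxb) (not_and_or.mp hxc)
        rw [heq] at hz
        simp only [Dset, Finset.mem_filter, Finset.mem_univ, true_and]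
        exact hz
      · simp only [Finset.mem_insert, Finset.mem_singleton, Prod.mk.injEq]
        push_neg
        constructor
        · intro hxi hyj
          rw [hxi, hyj, e1, hBij] at hz; exact hz rfl
        constructor
        · intro hxi hyl
          rw [hxi, hyl, e3, hBil] at hz; exact hz rfl
        · intro hxk hyj
          rw [hxk, hyj, e4, hBkj] at hz; exact hz rfl
  · have hBkl0 : B k l = 0 := (hB01 k l).resolve_right hBkl
    have hmem3 : (k, l) ∈ Dset A B := by simp [Dset, hAkl, hBkl0]
    refine card_lt_aux (w := ((k, j) : Fin n × Fin n)) hd12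
      (by simp [Prod.ext_iff, hik]) (by simp [Prod.ext_iff, hik]) hmem1 hmem2 hmem3 ?_
    intro z hz
    obtain ⟨x, y⟩ := z
    simp only [Dset, Finset.mem_filter, Finset.mem_univ, true_and] at hz
    by_cases hw : x = k ∧ y = j
    · refine Finset.mem_union_right _ ?_
      obtain ⟨rfl, rfl⟩ := hw
      exact Finset.mem_singleton_self _
    · refine Finset.mem_union_left _ (Finset.mem_sdiff.mpr ⟨?_, ?_⟩)
      · have hxa : ¬(x = i ∧ y = j) := by rintro ⟨rfl, rfl⟩; rw [e1, hBij] at hz; exact hz rfl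
        have hxb : ¬(x = i ∧ y = l) := by rintro ⟨rfl, rfl⟩; rw [e3, hBil] at hz; exact hz rfl
        have hxc : ¬(x = k ∧ y = l) := by rintro ⟨rfl, rfl⟩; rw [e2, hBkl0] at hz; exact hz rfl
        have heq : A' x y = A x y := hoff x y (not_and_or.mp hxa) (not_and_or.mp hxc)
          (not_and_or.mp hxb) (not_and_or.mp hw)
        rw [heq] at hz
        simp only [Dset, Finset.mem_filter, Finset.mem_univ, true_and]
        exact hz
      · simp only [Finset.mem_insert, Finset.mem_singleton, Prod.mk.injEq]
        push_neg
        constructor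
        · intro hxi hyj
          rw [hxi, hyj, e1, hBij] at hz; exact hz rfl
        constructor
        · intro hxi hyl
          rw [hxi, hyl, e3, hBil] at hz; exact hz rfl
        · intro hxk hyl
          rw [hxk, hyl, e2, hBkl0] at hz; exact hz rfl

lemma reduceA_tr (A B : Fin n → Fin n → ℕ) (hVA : Val A) (hB01 : ∀ p q, B p q = 0 ∨ B p q = 1)
    (i k j l : Fin n) (hik : i ≠ k) (hjl : j ≠ l) (hil : i ≠ l) (hkj : k ≠ j)
    (h1 : Tr A i j = 1) (h2 : Tr A k l = 1) (h3 : Tr A i l = 0) (h4 : Tr A k j = 0)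
    (h5 : Tr B i j = 0) (h6 : Tr B i l = 1) (hgood : ¬(Tr B k l = 1 ∧ Tr B k j = 0)) :
    ∃ A', DirectedStep A A' ∧ Val A' ∧ (∀ p, ∑ q, A' p q = ∑ q, A p q) ∧
      (∀ q, ∑ p, A' p q = ∑ p, A p q) ∧ (Dset A' B).card < (Dset A B).card := by
  obtain ⟨T, hstep, hv, hr, hc, hd⟩ := reduceA (Tr A) (Tr B)
    ⟨fun p q => hVA.1 q p, hVA.2⟩ (fun p q => hB01 q p) i k j l hik hjl hil hkj
    h1 h2 h3 h4 h5 h6 hgood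
  refine ⟨Tr T, step_tr hstep, ⟨fun p q => hv.1 q p, hv.2⟩, fun p => hc p, fun q => hr q, ?_⟩
  have e1 : (Dset (Tr T) B).card = (Dset T (Tr B)).card := dset_tr1 T B
  have e2 : (Dset (Tr A) (Tr B)).card = (Dset A B).card := dset_tr2 A B
  omega

lemma Rlem (A : Fin n → Fin n → ℕ) (hV : Val A) (p q r x : Fin n)
    (hpq : p ≠ q) (hqr : q ≠ r) (hpr : p ≠ r) (hxp : x ≠ p) (hxq : x ≠ q) (hxr : x ≠ r)
    (t1 : A p q = 1) (t2 : A q r = 1) (t3 : A r p = 1)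
    (z1 : A q p = 0) (z2 : A r q = 0) (z3 : A p r = 0)
    (hx1 : A x q = 1) (hx2 : A x r = 0) (hx3 : A x p = 0) :
    ∃ C, Relation.ReflTransGen DirectedStep A C ∧ Val C ∧
      (∀ a, ∑ b, C a b = ∑ b, A a b) ∧ (∀ b, ∑ a, C a b = ∑ a, A a b) ∧
      C p q = 0 ∧ C q r = 0 ∧ C r p = 0 ∧ C q p = 1 ∧ C r q = 1 ∧ C p r = 1 ∧
      (∀ a b, (a ≠ p ∨ b ≠ q) → (a ≠ q ∨ b ≠ r) → (a ≠ r ∨ b ≠ p) → (a ≠ q ∨ b ≠ p) →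
        (a ≠ r ∨ b ≠ q) → (a ≠ p ∨ b ≠ r) → C a b = A a b) := by
  obtain ⟨A1, s1, v1, r1, c1, e11, e12, e13, e14, o1⟩ :=
    switch_step A hV x r q p hxr hpq.symm hxp hqr.symm hx1 t3 hx3 z2
  -- A1: (x,q)=0, (r,p)=0, (x,p)=1, (r,q)=1
  have a1qr : A1 q r = 1 := by
    rw [o1 q r (Or.inl hxq.symm) (Or.inl hqr) (Or.inl hxq.symm) (Or.inl hqr)]; exact t2
  have a1qp : A1 q p = 0 := by
    rw [o1 q p (Or.inl hxq.symm) (Or.inl hqr) (Or.inl hxq.symm) (Or.inl hqr)]; exact z1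
  have a1xr : A1 x r = 0 := by
    rw [o1 x r (Or.inr hqr.symm) (Or.inl hxr) (Or.inr hpr.symm) (Or.inl hxr)]; exact hx2
  obtain ⟨A2, s2, v2, r2, c2, e21, e22, e23, e24, o2⟩ :=
    switch_step A1 v1 q x r p hxq.symm hpr.symm hpq.symm hxr a1qr e13 a1qp a1xr
  -- A2: (q,r)=0, (x,p)=0, (q,p)=1, (x,r)=1
  have a2pq : A2 p q = 1 := by
    rw [o2 p q (Or.inl hpq) (Or.inl hxp.symm) (Or.inl hpq) (Or.inl hxp.symm)]
    rw [o1 p q (Or.inl hxp.symm) (Or.inl hpr) (Or.inl hxp.symm) (Or.inl hpr)]; exact t1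
  have a2xq : A2 x q = 0 := by
    rw [o2 x q (Or.inl hxq) (Or.inr hpq.symm) (Or.inl hxq) (Or.inr hqr)]; exact e11
  have a2pr : A2 p r = 0 := by
    rw [o2 p r (Or.inl hpq) (Or.inl hxp.symm) (Or.inl hpq) (Or.inl hxp.symm)]
    rw [o1 p r (Or.inl hxp.symm) (Or.inl hpr) (Or.inl hxp.symm) (Or.inl hpr)]; exact z3
  obtain ⟨C, s3, v3, r3, c3, E1, E2, E3, E4, o3⟩ :=
    switch_step A2 v2 x p r q hxp hqr.symm hxq hpr e24 a2pq a2xq a2pr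
  -- C: (x,r)=0, (p,q)=0, (x,q)=1, (p,r)=1
  have cqr : C q r = 0 := by
    rw [o3 q r (Or.inl hxq.symm) (Or.inl hpq.symm) (Or.inl hxq.symm) (Or.inl hpq.symm)]
    exact e21
  have crp : C r p = 0 := by
    rw [o3 r p (Or.inl hxr.symm) (Or.inl hpr.symm) (Or.inl hxr.symm) (Or.inl hpr.symm)]
    rw [o2 r p (Or.inl hqr.symm) (Or.inl hxr.symm) (Or.inl hqr.symm) (Or.inl hxr.symm)]
    exact e12
  have cqp : C q p = 1 := by
    rw [o3 q p (Or.inl hxq.symm) (Or.inl hpq.symm) (Or.inl hxq.symm) (Or.inl hpq.symm)]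
    exact e23
  have crq : C r q = 1 := by
    rw [o3 r q (Or.inl hxr.symm) (Or.inl hpr.symm) (Or.inl hxr.symm) (Or.inl hpr.symm)]
    rw [o2 r q (Or.inl hqr.symm) (Or.inl hxr.symm) (Or.inl hqr.symm) (Or.inl hxr.symm)]
    exact e14
  refine ⟨C, Relation.ReflTransGen.head s1 (Relation.ReflTransGen.head s2
      (Relation.ReflTransGen.single s3)), v3,
    (fun a => ((r3 a).trans (r2 a)).trans (r1 a)),
    (fun b => ((c3 b).trans (c2 b)).trans (c1 b)),
    E2, cqr, crp, cqp, crq, E4, ?_⟩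
  intro a b k1 k2 k3 k4 k5 k6
  by_cases hax : a = x
  · subst hax
    by_cases hbq : b = q
    · subst hbq; rw [E3, hx1]
    · by_cases hbp : b = p
      · rw [hbp]
        have hc : C a p = A2 a p :=
          o3 a p (Or.inr hpr) (Or.inl hxp) (Or.inr hpq) (Or.inl hxp)
        rw [hc, e22, hx3]
      · by_cases hbr : b = r
        · subst hbr; rw [E1, hx2]
        · rw [o3 a b (Or.inr hbr) (Or.inl hxp) (Or.inr hbq) (Or.inl hxp)]
          rw [o2 a b (Or.inl hxq) (Or.inr hbp) (Or.inl hxq) (Or.inr hbr)]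
          exact o1 a b (Or.inr hbq) (Or.inl hxr) (Or.inr hbp) (Or.inl hxr)
  · rw [o3 a b (Or.inl hax) k1 (Or.inl hax) k6]
    rw [o2 a b k2 (Or.inl hax) k4 (Or.inl hax)]
    exact o1 a b (Or.inl hax) k3 (Or.inl hax) k5

lemma R2lem (A : Fin n → Fin n → ℕ) (hV : Val A) (p q r x : Fin n)
    (hpq : p ≠ q) (hqr : q ≠ r) (hpr : p ≠ r) (hxp : x ≠ p) (hxq : x ≠ q) (hxr : x ≠ r)
    (t1 : A p q = 1) (t2 : A q r = 1) (t3 : A r p = 1)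
    (z1 : A q p = 0) (z2 : A r q = 0) (z3 : A p r = 0)
    (hx1 : A x p = 1) (hx2 : A x q = 1) (hx3 : A x r = 0) :
    ∃ C, Relation.ReflTransGen DirectedStep A C ∧ Val C ∧
      (∀ a, ∑ b, C a b = ∑ b, A a b) ∧ (∀ b, ∑ a, C a b = ∑ a, A a b) ∧
      C p q = 0 ∧ C q r = 0 ∧ C r p = 0 ∧ C q p = 1 ∧ C r q = 1 ∧ C p r = 1 ∧
      (∀ a b, (a ≠ p ∨ b ≠ q) → (a ≠ q ∨ b ≠ r) → (a ≠ r ∨ b ≠ p) → (a ≠ q ∨ b ≠ p) →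
        (a ≠ r ∨ b ≠ q) → (a ≠ p ∨ b ≠ r) → C a b = A a b) := by
  obtain ⟨A1, s1, v1, r1, c1, e11, e12, e13, e14, o1⟩ :=
    switch_step A hV x q p r hxq hpr hxr hpq.symm hx1 t2 hx3 z1
  -- A1: (x,p)=0, (q,r)=0, (x,r)=1, (q,p)=1
  have a1xq : A1 x q = 1 := by
    rw [o1 x q (Or.inr hpq.symm) (Or.inl hxq) (Or.inr hqr) (Or.inl hxq)]; exact hx2
  have a1rp : A1 r p = 1 := by
    rw [o1 r p (Or.inl hxr.symm) (Or.inl hqr.symm) (Or.inl hxr.symm) (Or.inl hqr.symm)]; exact t3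
  have a1rq : A1 r q = 0 := by
    rw [o1 r q (Or.inl hxr.symm) (Or.inl hqr.symm) (Or.inl hxr.symm) (Or.inl hqr.symm)]; exact z2
  obtain ⟨A2, s2, v2, r2, c2, e21, e22, e23, e24, o2⟩ :=
    switch_step A1 v1 x r q p hxr hpq.symm hxp hqr.symm a1xq a1rp e11 a1rq
  -- A2: (x,q)=0, (r,p)=0, (x,p)=1, (r,q)=1
  have a2xr : A2 x r = 1 := by
    rw [o2 x r (Or.inr hqr.symm) (Or.inl hxr) (Or.inr hpr.symm) (Or.inl hxr)]; exact e13
  have a2pq : A2 p q = 1 := by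
    rw [o2 p q (Or.inl hxp.symm) (Or.inl hpr) (Or.inl hxp.symm) (Or.inl hpr)]
    rw [o1 p q (Or.inl hxp.symm) (Or.inl hpq) (Or.inl hxp.symm) (Or.inl hpq)]; exact t1
  have a2pr : A2 p r = 0 := by
    rw [o2 p r (Or.inl hxp.symm) (Or.inl hpr) (Or.inl hxp.symm) (Or.inl hpr)]
    rw [o1 p r (Or.inl hxp.symm) (Or.inl hpq) (Or.inl hxp.symm) (Or.inl hpq)]; exact z3
  obtain ⟨C, s3, v3, r3, c3, E1, E2, E3, E4, o3⟩ :=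
    switch_step A2 v2 x p r q hxp hqr.symm hxq hpr a2xr a2pq e21 a2pr
  -- C: (x,r)=0, (p,q)=0, (x,q)=1, (p,r)=1
  have cqr : C q r = 0 := by
    rw [o3 q r (Or.inl hxq.symm) (Or.inl hpq.symm) (Or.inl hxq.symm) (Or.inl hpq.symm)]
    rw [o2 q r (Or.inl hxq.symm) (Or.inl hqr) (Or.inl hxq.symm) (Or.inl hqr)]
    exact e12
  have crp : C r p = 0 := by
    rw [o3 r p (Or.inl hxr.symm) (Or.inl hpr.symm) (Or.inl hxr.symm) (Or.inl hpr.symm)]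
    exact e22
  have cqp : C q p = 1 := by
    rw [o3 q p (Or.inl hxq.symm) (Or.inl hpq.symm) (Or.inl hxq.symm) (Or.inl hpq.symm)]
    rw [o2 q p (Or.inl hxq.symm) (Or.inl hqr) (Or.inl hxq.symm) (Or.inl hqr)]
    exact e14
  have crq : C r q = 1 := by
    rw [o3 r q (Or.inl hxr.symm) (Or.inl hpr.symm) (Or.inl hxr.symm) (Or.inl hpr.symm)]
    exact e24
  refine ⟨C, Relation.ReflTransGen.head s1 (Relation.ReflTransGen.head s2
      (Relation.ReflTransGen.single s3)), v3,
    (fun a => ((r3 a).trans (r2 a)).trans (r1 a)),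
    (fun b => ((c3 b).trans (c2 b)).trans (c1 b)),
    E2, cqr, crp, cqp, crq, E4, ?_⟩
  intro a b k1 k2 k3 k4 k5 k6
  by_cases hax : a = x
  · subst hax
    by_cases hbq : b = q
    · subst hbq; rw [E3, hx2]
    · by_cases hbp : b = p
      · rw [hbp]
        have hc : C a p = A2 a p :=
          o3 a p (Or.inr hpr) (Or.inl hxp) (Or.inr hpq) (Or.inl hxp)
        rw [hc, e23, hx1]
      · by_cases hbr : b = r
        · subst hbr; rw [E1, hx3]
        · rw [o3 a b (Or.inr hbr) (Or.inl hxp) (Or.inr hbq) (Or.inl hxp)]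
          rw [o2 a b (Or.inr hbq) (Or.inl hxr) (Or.inr hbp) (Or.inl hxr)]
          exact o1 a b (Or.inr hbp) (Or.inl hxq) (Or.inr hbr) (Or.inl hxq)
  · rw [o3 a b (Or.inl hax) k1 (Or.inl hax) k6]
    rw [o2 a b (Or.inl hax) k3 (Or.inl hax) k5]
    exact o1 a b (Or.inl hax) k2 (Or.inl hax) k4

lemma relabel (A : Fin n → Fin n → ℕ) (hV : Val A) (i j l : Fin n)
    (hij : i ≠ j) (hil : i ≠ l) (hjl : j ≠ l)
    (t1 : A i j = 1) (t2 : A j l = 1) (t3 : A l i = 1)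
    (t4 : A i l = 0) (t5 : A l j = 0) (t6 : A j i = 0)
    (hu : ∀ x, x ≠ i → x ≠ j → x ≠ l → A x j = A x l ∧ A j x = A l x) :
    ∃ C, Relation.ReflTransGen DirectedStep A C ∧ Val C ∧
      (∀ p, ∑ q, C p q = ∑ q, A p q) ∧ (∀ q, ∑ p, C p q = ∑ p, A p q) ∧
      C i j = 0 ∧ C j l = 0 ∧ C l i = 0 ∧ C j i = 1 ∧ C l j = 1 ∧ C i l = 1 ∧
      (∀ a b, (a ≠ i ∨ b ≠ j) → (a ≠ j ∨ b ≠ l) → (a ≠ l ∨ b ≠ i) → (a ≠ j ∨ b ≠ i) →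
        (a ≠ l ∨ b ≠ j) → (a ≠ i ∨ b ≠ l) → C a b = A a b) := by
  set σ : Equiv.Perm (Fin n) := Equiv.swap j l with hσdef
  set C : Fin n → Fin n → ℕ := fun p q => A (σ p) (σ q) with hC
  have hσj : σ j = l := Equiv.swap_apply_left j l
  have hσl : σ l = j := Equiv.swap_apply_right j l
  have hσx : ∀ x, x ≠ j → x ≠ l → σ x = x := fun x h1 h2 => Equiv.swap_apply_of_ne_of_ne h1 h2
  have hσi : σ i = i := hσx i hij hil
  have hrowjl : ∑ y, A l y = ∑ y, A j y := by
    refine sum3 hij hil hjl (fun x hxi hxj hxl => ((hu x hxi hxj hxl).2).symm) ?_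
    rw [t2, t3, t5, t6, hV.2 j, hV.2 l]
  have hcoljl : ∑ y, A y l = ∑ y, A y j := by
    refine sum3 hij hil hjl (fun x hxi hxj hxl => ((hu x hxi hxj hxl).1).symm) ?_
    rw [t1, t2, t4, t5, hV.2 j, hV.2 l]
  have hdegr : ∀ v, ∑ y, A (σ v) y = ∑ y, A v y := by
    intro v
    by_cases hvj : v = j
    · rw [hvj, hσj]; exact hrowjl
    · by_cases hvl : v = l
      · rw [hvl, hσl]; exact hrowjl.symm
      · rw [hσx v hvj hvl]
  have hdegc : ∀ v, ∑ y, A y (σ v) = ∑ y, A y v := by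
    intro v
    by_cases hvj : v = j
    · rw [hvj, hσj]; exact hcoljl
    · by_cases hvl : v = l
      · rw [hvl, hσl]; exact hcoljl.symm
      · rw [hσx v hvj hvl]
  have hstep : DirectedStep A C := Or.inr ⟨σ, fun p q => rfl, hdegr, hdegc⟩
  have hrows : ∀ p, ∑ q, C p q = ∑ q, A p q := by
    intro p
    have h1 : ∑ q, C p q = ∑ q, A (σ p) q := Equiv.sum_comp σ (fun q => A (σ p) q)
    rw [h1]; exact hdegr p
  have hcols : ∀ q, ∑ p, C p q = ∑ p, A p q := by
    intro q
    have h1 : ∑ p, C p q = ∑ p, A p (σ q) := Equiv.sum_comp σ (fun p => A p (σ q))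
    rw [h1]; exact hdegc q
  have hval : Val C := ⟨fun p q => hV.1 _ _, fun p => by show A (σ p) (σ p) = 0; exact hV.2 _⟩
  have cij : C i j = 0 := by show A (σ i) (σ j) = 0; rw [hσi, hσj]; exact t4
  have cjl : C j l = 0 := by show A (σ j) (σ l) = 0; rw [hσj, hσl]; exact t5
  have cli : C l i = 0 := by show A (σ l) (σ i) = 0; rw [hσl, hσi]; exact t6
  have cji : C j i = 1 := by show A (σ j) (σ i) = 1; rw [hσj, hσi]; exact t3
  have clj : C l j = 1 := by show A (σ l) (σ j) = 1; rw [hσl, hσj]; exact t2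
  have cil : C i l = 1 := by show A (σ i) (σ l) = 1; rw [hσi, hσl]; exact t1
  refine ⟨C, Relation.ReflTransGen.single hstep, hval, hrows, hcols,
    cij, cjl, cli, cji, clj, cil, ?_⟩
  intro a b k1 k2 k3 k4 k5 k6
  show A (σ a) (σ b) = A a b
  by_cases haj : a = j
  · rw [haj, hσj]
    by_cases hbj : b = j
    · rw [hbj, hσj, hV.2 l, hV.2 j]
    · by_cases hbl : b = l
      · rcases k2 with h | h
        · exact absurd haj h
        · exact absurd hbl h
      · by_cases hbi : b = i
        · rcases k4 with h | h
          · exact absurd haj h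
          · exact absurd hbi h
        · rw [hσx b hbj hbl]
          exact ((hu b hbi hbj hbl).2).symm
  · by_cases hal : a = l
    · rw [hal, hσl]
      by_cases hbl : b = l
      · rw [hbl, hσl, hV.2 j, hV.2 l]
      · by_cases hbj : b = j
        · rcases k5 with h | h
          · exact absurd hal h
          · exact absurd hbj h
        · by_cases hbi : b = i
          · rcases k3 with h | h
            · exact absurd hal h
            · exact absurd hbi h
          · rw [hσx b hbj hbl]
            exact (hu b hbi hbj hbl).2
    · rw [hσx a haj hal]
      by_cases hbj : b = j
      · rw [hbj, hσj]
        have hai : a ≠ i := by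
          rcases k1 with h | h
          · exact h
          · exact absurd hbj h
        exact ((hu a hai haj hal).1).symm
      · by_cases hbl : b = l
        · rw [hbl, hσl]
          have hai : a ≠ i := by
            rcases k6 with h | h
            · exact h
            · exact absurd hbl h
          exact (hu a hai haj hal).1
        · rw [hσx b hbj hbl]
end SwitchAux

/-- the switch chain with degree-preserving relabelling is connected on
the set of simple directed graphs with given in- and out-degrees: any two adjacency
matrices with the same row sums and the same column sums are connected by a finite
sequence of diagonal-preserving switches and degree-preserving relabellings. -/
theorem directed_switch_chain_with_relabelling_connected {n : ℕ}
    (A B : Fin n → Fin n → ℕ)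
    (hA01 : ∀ i j, A i j = 0 ∨ A i j = 1)
    (hB01 : ∀ i j, B i j = 0 ∨ B i j = 1)
    (hAdiag : ∀ i, A i i = 0) (hBdiag : ∀ i, B i i = 0)
    (hrow : ∀ i, ∑ j, A i j = ∑ j, B i j)
    (hcol : ∀ j, ∑ i, A i j = ∑ i, B i j) :
    Relation.ReflTransGen DirectedStep A B := by
  suffices key : ∀ (N : ℕ) (A B : Fin n → Fin n → ℕ),
      (∀ i j, A i j = 0 ∨ A i j = 1) → (∀ i j, B i j = 0 ∨ B i j = 1) →
      (∀ i, A i i = 0) → (∀ i, B i i = 0) →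
      (∀ i, ∑ j, A i j = ∑ j, B i j) → (∀ j, ∑ i, A i j = ∑ i, B i j) →
      (Dset A B).card ≤ N → Relation.ReflTransGen DirectedStep A B by
    exact key (Dset A B).card A B hA01 hB01 hAdiag hBdiag hrow hcol le_rfl
  intro N
  induction N with
  | zero =>
    intro A B _ _ _ _ _ _ hcard
    have hempty : Dset A B = ∅ := Finset.card_eq_zero.mp (Nat.le_zero.mp hcard)
    have hAB : A = B := by
      funext p q
      by_contra hne
      have hm : (p, q) ∈ Dset A B := by simpa [Dset] using hne
      rw [hempty] at hm
      exact absurd hm (Finset.notMem_empty _)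
    exact hAB ▸ Relation.ReflTransGen.refl
  | succ N ih =>
    intro A B hA01 hB01 hAd hBd hrow hcol hcard
    by_cases hAB : A = B
    · exact hAB ▸ Relation.ReflTransGen.refl
    have hdiff : ∃ p q, A p q ≠ B p q := by
      by_contra h
      push_neg at h
      exact hAB (funext fun p => funext fun q => h p q)
    obtain ⟨p0, q0, hpq⟩ := hdiff
    have htot : ∑ z : Fin n × Fin n, A z.1 z.2 = ∑ z : Fin n × Fin n, B z.1 z.2 := by
      rw [Fintype.sum_prod_type, Fintype.sum_prod_type]
      exact Finset.sum_congr rfl fun p _ => hrow p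
    have hex : ∃ i j, A i j = 1 ∧ B i j = 0 := by
      rcases hA01 p0 q0 with h0 | h1
      · have hb1 : B p0 q0 = 1 := by
          rcases hB01 p0 q0 with h' | h'
          · exact absurd (h0.trans h'.symm) hpq
          · exact h'
        obtain ⟨z, hzne, hlt⟩ := exists_gt_of_sum_eq htot (a := (p0, q0))
          (by show A p0 q0 < B p0 q0; omega)
        refine ⟨z.1, z.2, ?_, ?_⟩
        · rcases hA01 z.1 z.2 with h | h <;> rcases hB01 z.1 z.2 with h' | h' <;> omega
        · rcases hA01 z.1 z.2 with h | h <;> rcases hB01 z.1 z.2 with h' | h' <;> omega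
      · have hb0 : B p0 q0 = 0 := by
          rcases hB01 p0 q0 with h' | h'
          · exact h'
          · exact absurd (h1.trans h'.symm) hpq
        exact ⟨p0, q0, h1, hb0⟩
    obtain ⟨i, j, hAij, hBij⟩ := hex
    have hij : i ≠ j := by rintro rfl; rw [hAd i] at hAij; omega
    obtain ⟨l, hlj, hll⟩ := exists_gt_of_sum_eq (f := fun q => B i q) (g := fun q => A i q)
      (hrow i).symm (a := j) (by show B i j < A i j; omega)
    have hAil : A i l = 0 := by
      rcases hA01 i l with h | h
      · exact h
      · rcases hB01 i l with h' | h' <;> omega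
    have hBil : B i l = 1 := by rcases hB01 i l with h | h <;> omega
    have hil : i ≠ l := by rintro rfl; rw [hBd i] at hBil; omega
    have hjl : j ≠ l := hlj.symm
    -- triple 1 : columns (j,l) at row i
    rcases triple A B hA01 hB01 hAd hBd i j l hij hil hjl hAij hBij hAil hBil
      (hcol j) (hcol l) with hG | hG | hT1
    · obtain ⟨k, hki, hkj2, hAkl, hAkj, hgood⟩ := hG
      obtain ⟨A', hstep, hval, hr, hc, hlt⟩ := reduceA A B ⟨hA01, hAd⟩ hB01 i k j l
        (Ne.symm hki) hjl hil hkj2 hAij hAkl hAil hAkj hBij hBil hgood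
      exact Relation.ReflTransGen.head hstep (ih A' B hval.1 hB01 hval.2 hBd
        (fun p => (hr p).trans (hrow p)) (fun q => (hc q).trans (hcol q)) (by omega))
    · obtain ⟨k, hki, hkl2, hBkj, hBkl, hgood⟩ := hG
      obtain ⟨B', hstep, hval, hr, hc, hlt⟩ := reduceA B A ⟨hB01, hBd⟩ hA01 i k l j
        (Ne.symm hki) hjl.symm hij hkl2 hBil hBkj hBij hBkl hAil hAij hgood
      have hc1 : (Dset B' A).card = (Dset A B').card := by rw [dset_comm]
      have hc2 : (Dset B A).card = (Dset A B).card := by rw [dset_comm]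
      have hch := ih A B' hA01 hval.1 hAd hval.2
        (fun p => (hrow p).trans (hr p).symm) (fun q => (hcol q).trans (hc q).symm) (by omega)
      exact hch.tail (step_symm hBd hstep)
    obtain ⟨hAjl, hBjl, hAlj, hBlj⟩ := hT1
    -- triple 2 : rows (i,l) at column j  (transposed triple (j,i,l))
    rcases triple (Tr A) (Tr B) (fun p q => hA01 q p) (fun p q => hB01 q p) hAd hBd
      j i l hij.symm hjl hil hAij hBij hAlj hBlj (hrow i) (hrow l) with hG | hG | hT2
    · obtain ⟨k, hkj', hki', h1, h2, h3⟩ := hG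
      obtain ⟨A', hstep, hval, hr, hc, hlt⟩ := reduceA_tr A B ⟨hA01, hAd⟩ hB01 j k i l
        (Ne.symm hkj') hil hjl hki' hAij h1 hAlj h2 hBij hBlj h3
      exact Relation.ReflTransGen.head hstep (ih A' B hval.1 hB01 hval.2 hBd
        (fun p => (hr p).trans (hrow p)) (fun q => (hc q).trans (hcol q)) (by omega))
    · obtain ⟨k, hkj', hkl', h1, h2, h3⟩ := hG
      obtain ⟨B', hstep, hval, hr, hc, hlt⟩ := reduceA_tr B A ⟨hB01, hBd⟩ hA01 j k l i
        (Ne.symm hkj') hil.symm hij.symm hkl' hBlj h1 hBij h2 hAlj hAij h3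
      have hc1 : (Dset B' A).card = (Dset A B').card := by rw [dset_comm]
      have hc2 : (Dset B A).card = (Dset A B).card := by rw [dset_comm]
      have hch := ih A B' hA01 hval.1 hAd hval.2
        (fun p => (hrow p).trans (hr p).symm) (fun q => (hcol q).trans (hc q).symm) (by omega)
      exact hch.tail (step_symm hBd hstep)
    obtain ⟨hAli0, hBli0, _, _⟩ := hT2
    have hAli : A l i = 1 := hAli0
    have hBli : B l i = 0 := hBli0
    -- triple 3 : transposed triple (l,j,i)
    rcases triple (Tr A) (Tr B) (fun p q => hA01 q p) (fun p q => hB01 q p) hAd hBd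
      l j i hjl.symm hil.symm hij.symm hAjl hBjl hAil hBil (hrow j) (hrow i) with hG | hG | hT3
    · obtain ⟨k, hkl', hkj', h1, h2, h3⟩ := hG
      obtain ⟨A', hstep, hval, hr, hc, hlt⟩ := reduceA_tr A B ⟨hA01, hAd⟩ hB01 l k j i
        (Ne.symm hkl') hij.symm hil.symm hkj' hAjl h1 hAil h2 hBjl hBil h3
      exact Relation.ReflTransGen.head hstep (ih A' B hval.1 hB01 hval.2 hBd
        (fun p => (hr p).trans (hrow p)) (fun q => (hc q).trans (hcol q)) (by omega))
    · obtain ⟨k, hkl', hki', h1, h2, h3⟩ := hG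
      obtain ⟨B', hstep, hval, hr, hc, hlt⟩ := reduceA_tr B A ⟨hB01, hBd⟩ hA01 l k i j
        (Ne.symm hkl') hij hjl.symm hki' hBil h1 hBjl h2 hAil hAjl h3
      have hc1 : (Dset B' A).card = (Dset A B').card := by rw [dset_comm]
      have hc2 : (Dset B A).card = (Dset A B).card := by rw [dset_comm]
      have hch := ih A B' hA01 hval.1 hAd hval.2
        (fun p => (hrow p).trans (hr p).symm) (fun q => (hcol q).trans (hc q).symm) (by omega)
      exact hch.tail (step_symm hBd hstep)
    obtain ⟨_, _, hAji0, hBji0⟩ := hT3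
    have hAji : A j i = 0 := hAji0
    have hBji : B j i = 1 := hBji0
    -- full triangle established.
    have finish : ∀ C : Fin n → Fin n → ℕ, Relation.ReflTransGen DirectedStep A C →
        (∀ p q, C p q = 0 ∨ C p q = 1) → (∀ p, C p p = 0) →
        (∀ p, ∑ q, C p q = ∑ q, A p q) → (∀ q, ∑ p, C p q = ∑ p, A p q) →
        C i j = 0 → C j l = 0 → C l i = 0 → C j i = 1 → C l j = 1 → C i l = 1 →
        (∀ a b, (a ≠ i ∨ b ≠ j) → (a ≠ j ∨ b ≠ l) → (a ≠ l ∨ b ≠ i) → (a ≠ j ∨ b ≠ i) →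
          (a ≠ l ∨ b ≠ j) → (a ≠ i ∨ b ≠ l) → C a b = A a b) →
        Relation.ReflTransGen DirectedStep A B := by
      intro C hchain h01 hd hr hc c1 c2 c3 c4 c5 c6 hoff
      have hsub : Dset C B ⊆ Dset A B := by
        intro z hz
        obtain ⟨x, y⟩ := z
        simp only [Dset, Finset.mem_filter, Finset.mem_univ, true_and] at hz ⊢
        have k1 : ¬(x = i ∧ y = j) := by rintro ⟨rfl, rfl⟩; rw [c1, hBij] at hz; exact hz rfl
        have k2 : ¬(x = j ∧ y = l) := by rintro ⟨rfl, rfl⟩; rw [c2, hBjl] at hz; exact hz rfl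
        have k3 : ¬(x = l ∧ y = i) := by rintro ⟨rfl, rfl⟩; rw [c3, hBli] at hz; exact hz rfl
        have k4 : ¬(x = j ∧ y = i) := by rintro ⟨rfl, rfl⟩; rw [c4, hBji] at hz; exact hz rfl
        have k5 : ¬(x = l ∧ y = j) := by rintro ⟨rfl, rfl⟩; rw [c5, hBlj] at hz; exact hz rfl
        have k6 : ¬(x = i ∧ y = l) := by rintro ⟨rfl, rfl⟩; rw [c6, hBil] at hz; exact hz rfl
        rwa [hoff x y (not_and_or.mp k1) (not_and_or.mp k2) (not_and_or.mp k3)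
          (not_and_or.mp k4) (not_and_or.mp k5) (not_and_or.mp k6)] at hz
      have hmemA : (i, j) ∈ Dset A B := by simp [Dset, hAij, hBij]
      have hmemC : (i, j) ∉ Dset C B := by simp [Dset, c1, hBij]
      have hlt : (Dset C B).card < (Dset A B).card :=
        Finset.card_lt_card ((Finset.ssubset_iff_of_subset hsub).mpr ⟨(i, j), hmemA, hmemC⟩)
      exact hchain.trans (ih C B h01 hB01 hd hBd
        (fun p => (hr p).trans (hrow p)) (fun q => (hc q).trans (hcol q)) (by omega))
    by_cases huni : ∀ x, x ≠ i → x ≠ j → x ≠ l → A x j = A x l ∧ A j x = A l x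
    · obtain ⟨C, hchain, hval, hr, hc, c1, c2, c3, c4, c5, c6, hoff⟩ :=
        relabel A ⟨hA01, hAd⟩ i j l hij hil hjl hAij hAjl hAli hAil hAlj hAji huni
      exact finish C hchain hval.1 hval.2 hr hc c1 c2 c3 c4 c5 c6 hoff
    push_neg at huni
    obtain ⟨x, hxi, hxj, hxl, hx⟩ := huni
    by_cases hcolu : A x j = A x l
    · -- row nonuniformity at x
      have hrne : A j x ≠ A l x := hx hcolu
      rcases hA01 j x with hjx | hjx <;> rcases hA01 l x with hlx | hlx
      · exact absurd (hjx.trans hlx.symm) hrne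
      · -- A j x = 0, A l x = 1
        rcases hA01 i x with hix | hix
        · obtain ⟨C', hchain, hval, hr, hc, c1, c2, c3, c4, c5, c6, hoff⟩ :=
            Rlem (Tr A) ⟨fun p q => hA01 q p, hAd⟩ i l j x hil hjl.symm hij hxi hxl hxj
              hAli hAjl hAij hAil hAlj hAji hlx hjx hix
          exact finish (Tr C') (chain_tr hchain) (fun p q => hval.1 q p) hval.2
            (fun p => hc p) (fun q => hr q) c3 c2 c1 c6 c5 c4
            (fun a b k1 k2 k3 k4 k5 k6 =>
              hoff b a k3.symm k2.symm k1.symm k6.symm k5.symm k4.symm)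
        · obtain ⟨C', hchain, hval, hr, hc, c1, c2, c3, c4, c5, c6, hoff⟩ :=
            R2lem (Tr A) ⟨fun p q => hA01 q p, hAd⟩ i l j x hil hjl.symm hij hxi hxl hxj
              hAli hAjl hAij hAil hAlj hAji hix hlx hjx
          exact finish (Tr C') (chain_tr hchain) (fun p q => hval.1 q p) hval.2
            (fun p => hc p) (fun q => hr q) c3 c2 c1 c6 c5 c4
            (fun a b k1 k2 k3 k4 k5 k6 =>
              hoff b a k3.symm k2.symm k1.symm k6.symm k5.symm k4.symm)
      · -- A j x = 1, A l x = 0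
        rcases hA01 i x with hix | hix
        · obtain ⟨C', hchain, hval, hr, hc, c1, c2, c3, c4, c5, c6, hoff⟩ :=
            Rlem (Tr A) ⟨fun p q => hA01 q p, hAd⟩ l j i x hjl.symm hij.symm hil.symm
              hxl hxj hxi hAjl hAij hAli hAlj hAji hAil hjx hix hlx
          exact finish (Tr C') (chain_tr hchain) (fun p q => hval.1 q p) hval.2
            (fun p => hc p) (fun q => hr q) c2 c1 c3 c5 c4 c6
            (fun a b k1 k2 k3 k4 k5 k6 =>
              hoff b a k2.symm k1.symm k3.symm k5.symm k4.symm k6.symm)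
        · obtain ⟨C', hchain, hval, hr, hc, c1, c2, c3, c4, c5, c6, hoff⟩ :=
            R2lem (Tr A) ⟨fun p q => hA01 q p, hAd⟩ j i l x hij.symm hil hjl hxj hxi hxl
              hAij hAli hAjl hAji hAil hAlj hjx hix hlx
          exact finish (Tr C') (chain_tr hchain) (fun p q => hval.1 q p) hval.2
            (fun p => hc p) (fun q => hr q) c1 c3 c2 c4 c6 c5
            (fun a b k1 k2 k3 k4 k5 k6 =>
              hoff b a k1.symm k3.symm k2.symm k4.symm k6.symm k5.symm)
      · exact absurd (hjx.trans hlx.symm) hrne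
    · -- column nonuniformity at x
      rcases hA01 x j with hxj0 | hxj1 <;> rcases hA01 x l with hxl0 | hxl1
      · exact absurd (hxj0.trans hxl0.symm) hcolu
      · -- A x j = 0, A x l = 1
        rcases hA01 x i with hxi0 | hxi1
        · obtain ⟨C, hchain, hval, hr, hc, c1, c2, c3, c4, c5, c6, hoff⟩ :=
            Rlem A ⟨hA01, hAd⟩ j l i x hjl hil.symm hij.symm hxj hxl hxi
              hAjl hAli hAij hAlj hAil hAji hxl1 hxi0 hxj0
          exact finish C hchain hval.1 hval.2 hr hc c3 c1 c2 c6 c4 c5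
            (fun a b k1 k2 k3 k4 k5 k6 => hoff a b k2 k3 k1 k5 k6 k4)
        · obtain ⟨C, hchain, hval, hr, hc, c1, c2, c3, c4, c5, c6, hoff⟩ :=
            R2lem A ⟨hA01, hAd⟩ l i j x hil.symm hij hjl.symm hxl hxi hxj
              hAli hAij hAjl hAil hAji hAlj hxl1 hxi1 hxj0
          exact finish C hchain hval.1 hval.2 hr hc c2 c3 c1 c5 c6 c4
            (fun a b k1 k2 k3 k4 k5 k6 => hoff a b k3 k1 k2 k6 k4 k5)
      · -- A x j = 1, A x l = 0
        rcases hA01 x i with hxi0 | hxi1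
        · obtain ⟨C, hchain, hval, hr, hc, c1, c2, c3, c4, c5, c6, hoff⟩ :=
            Rlem A ⟨hA01, hAd⟩ i j l x hij hjl hil hxi hxj hxl
              hAij hAjl hAli hAji hAlj hAil hxj1 hxl0 hxi0
          exact finish C hchain hval.1 hval.2 hr hc c1 c2 c3 c4 c5 c6 hoff
        · obtain ⟨C, hchain, hval, hr, hc, c1, c2, c3, c4, c5, c6, hoff⟩ :=
            R2lem A ⟨hA01, hAd⟩ i j l x hij hjl hil hxi hxj hxl
              hAij hAjl hAli hAji hAlj hAil hxi1 hxj1 hxl0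
          exact finish C hchain hval.1 hval.2 hr hc c1 c2 c3 c4 c5 c6 hoff
      · exact absurd (hxj1.trans hxl1.symm) hcolu
end

section
/- For every integer n ≥ 2, the real 2×2 matrix P̄ with first row (1 − 4(n−1)/(n(2n−1)), 4(n−1)/(n(2n−1))) and second row (2/(n(2n−1)), 1 − 2/(n(2n−1))) is a stochastic matrix whose eigenvalues are exactly 1 and 1 − 2/n; equivalently, its characteristic polynomial is (λ − 1)(λ − (1 − 2/n)). In particular the spectral gap of P̄ is 2/n. -/
open Finset Polynomial

/-- for `n ≥ 2`, the transition matrix of the projected switch chain on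
the two isomorphism classes of bipartite graphs with degrees `((2,…,2),(n-1,n-1,1,1))`
is a stochastic matrix whose characteristic polynomial is
`(λ - 1)(λ - (1 - 2/n))`, i.e. its eigenvalues are exactly `1` and `1 - 2/n`;
in particular its spectral gap is `2/n`. -/
theorem projected_switch_chain_spectral_gap (n : ℕ) (hn : 2 ≤ n) :
    ∀ a b : ℝ, a = 4 * ((n : ℝ) - 1) / ((n : ℝ) * (2 * (n : ℝ) - 1)) →
      b = 2 / ((n : ℝ) * (2 * (n : ℝ) - 1)) →
      ∀ Pbar : Matrix (Fin 2) (Fin 2) ℝ, Pbar = !![1 - a, a; b, 1 - b] →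
        (∀ i j, 0 ≤ Pbar i j) ∧
        (∀ i, ∑ j, Pbar i j = 1) ∧
        Pbar.charpoly = (X - C 1) * (X - C (1 - 2 / (n : ℝ))) ∧
        1 - |1 - 2 / (n : ℝ)| = 2 / (n : ℝ) := by
  intro a b ha hb Pbar hP
  have hn' : (2 : ℝ) ≤ (n : ℝ) := by exact_mod_cast hn
  have hD : (0 : ℝ) < (n : ℝ) * (2 * (n : ℝ) - 1) := by nlinarith
  have hne : ((n : ℝ) * (2 * (n : ℝ) - 1)) ≠ 0 := ne_of_gt hD
  have hnne : (n : ℝ) ≠ 0 := by positivity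
  have ha0 : 0 ≤ a := by
    rw [ha]; apply div_nonneg _ (le_of_lt hD); nlinarith
  have ha1 : a ≤ 1 := by
    rw [ha, div_le_one hD]; nlinarith
  have hb0 : 0 ≤ b := by
    rw [hb]; positivity
  have hb1 : b ≤ 1 := by
    rw [hb, div_le_one hD]; nlinarith
  have hab : a + b = 2 / (n : ℝ) := by
    rw [ha, hb, ← add_div, div_eq_div_iff hne hnne]; ring
  refine ⟨?_, ?_, ?_, ?_⟩
  · intro i j
    fin_cases i <;> fin_cases j <;> simp [hP] <;> linarith
  · intro i
    fin_cases i <;> simp [hP, Fin.sum_univ_two]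
  · rw [← hab]
    rw [Matrix.charpoly, Matrix.det_fin_two]
    simp [hP, Matrix.charmatrix_apply, Matrix.one_apply, map_sub, map_add, map_one]
    ring
  · have h1 : 2 / (n : ℝ) ≤ 1 := by
      rw [div_le_one (by linarith)]; linarith
    rw [abs_of_nonneg (by linarith)]; ring
end
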